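/- arXiv:2002.12874 — 3 statements merged into one kernel-verified Lean document; each statement's English description precedes it below -/
import Mathlib

section
/- Let T ∈ ℤ[[x,y,s]] be the power series T = Σ_{M ∈ 𝒢ℳ²} s^{h1⁰(M)} x^{2(d(M)+h1(M))} y^{u(M)+h2(M)} (summing over all bicolored grand Motzkin paths; each monomial receives finitely many contributions). Then Σ_{B ∈ 𝒰ℬ} s^{ds(B)} x^{e(B)} y^{n(B)} = y(1+x−y)·T − y in ℤ[[x,y,s]]. (This is the identity Σ_B s^{ds(B)} x^{e(B)} y^{n(B)} = y(1+x−y)/((1−s)x² + √(((x+1)²−y)((x−1)²−y))) − y.) -/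
/-- Steps of a bicolored grand Motzkin path. -/
inductive BStep : Type
  | U | D | H1 | H2
  deriving DecidableEq

/-- A bicolored grand Motzkin path: a word over {U,D,H1,H2} with equally many U's and D's. -/
def IsBicoloredGrandMotzkin (w : List BStep) : Prop :=
  w.count BStep.U = w.count BStep.D

/-- The number of `H1` steps of `w` lying on the x-axis, i.e. whose starting height
(number of earlier U's minus earlier D's) is `0`. -/
def h1zero (w : List BStep) : ℕ :=
  ((Finset.range w.length).filter fun i =>
    w.getD i BStep.U = BStep.H1 ∧ (w.take i).count BStep.U = (w.take i).count BStep.D).card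

/-- The series `T = Σ_{M ∈ 𝒢ℳ²} s^{h1⁰(M)} x^{2(d(M)+h1(M))} y^{u(M)+h2(M)}` in `ℤ[[x,y,s]]`.
Variable `0` is `x`, variable `1` is `y`, variable `2` is `s`. -/
noncomputable def T : MvPowerSeries (Fin 3) ℤ := fun d =>
  ({w : List BStep | IsBicoloredGrandMotzkin w ∧
      2 * (w.count BStep.D + w.count BStep.H1) = d 0 ∧
      w.count BStep.U + w.count BStep.H2 = d 1 ∧
      h1zero w = d 2}.ncard : ℤ)

/-- A unimodal bargraph with centered maximum: a composition `(a_1,…,a_k)` with `k ≥ 1`,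
all parts at least 1, with `a_1 ≤ ⋯ ≤ a_{⌊(k+1)/2⌋}` and `a_{⌈(k+1)/2⌉} ≥ ⋯ ≥ a_k`. -/
def IsUB (L : List ℕ) : Prop :=
  L ≠ [] ∧ (∀ a ∈ L, 1 ≤ a) ∧
    (∀ i, i + 2 ≤ (L.length + 1) / 2 → L.getD i 0 ≤ L.getD (i + 1) 0) ∧
    (∀ i, (L.length + 2) / 2 ≤ i + 1 → i + 2 ≤ L.length → L.getD (i + 1) 0 ≤ L.getD i 0)

/-- The height `n(B)` of a bargraph: the maximum of its column heights. -/
def maxComp (L : List ℕ) : ℕ := L.foldr max 0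

/-- The degree of symmetry of a composition `(a_1,…,a_k)`:
`#{i : 1 ≤ i ≤ k/2, a_i = a_{k+1−i}}`. -/
def dsComp (L : List ℕ) : ℕ :=
  ((Finset.range (L.length / 2)).filter fun i =>
    L.getD i 0 = L.getD (L.length - 1 - i) 0).card

/-- The series `Σ_{B ∈ 𝒰ℬ} s^{ds(B)} x^{e(B)} y^{n(B)}` in `ℤ[[x,y,s]]`, where `e(B)` is the
width (number of columns) and `n(B)` the height of the bargraph `B`. -/
noncomputable def UBgf : MvPowerSeries (Fin 3) ℤ := fun d =>
  ({L : List ℕ | IsUB L ∧ L.length = d 0 ∧ maxComp L = d 1 ∧ dsComp L = d 2}.ncard : ℤ)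

namespace UBaux

def xstep : BStep → Bool
  | BStep.U => false | BStep.D => true | BStep.H1 => true | BStep.H2 => false

def qstep : BStep → Bool
  | BStep.U => true | BStep.D => false | BStep.H1 => true | BStep.H2 => false

def decode : Bool → Bool → BStep
  | true, true => BStep.H1
  | true, false => BStep.D
  | false, true => BStep.U
  | false, false => BStep.H2

def heights : List Bool → ℕ → List ℕ
  | [], _ => []
  | true :: l, h => h :: heights l h
  | false :: l, h => heights l (h + 1)

def unheights : List ℕ → ℕ → ℕ → List Bool
  | [], h, b => List.replicate (b - h) false
  | a :: l, h, b => List.replicate (a - h) false ++ true :: unheights l a b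

/-- number of positions (below both lengths) where the two lists agree -/
def eqcount (u v : List ℕ) : ℕ :=
  ((Finset.range (min u.length v.length)).filter fun j => u.getD j 0 = v.getD j 0).card

@[simp] theorem heights_nil (h : ℕ) : heights [] h = [] := rfl
@[simp] theorem heights_cons_true (l : List Bool) (h : ℕ) :
    heights (true :: l) h = h :: heights l h := rfl
@[simp] theorem heights_cons_false (l : List Bool) (h : ℕ) :
    heights (false :: l) h = heights l (h + 1) := rfl

theorem heights_length (P : List Bool) (h : ℕ) :
    (heights P h).length = P.count true := by
  induction P generalizing h with
  | nil => simp [heights]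
  | cons a l ih =>
    cases a <;> simp [heights, ih, List.count_cons]

theorem le_of_mem_heights {P : List Bool} {h a : ℕ} (ha : a ∈ heights P h) : h ≤ a := by
  induction P generalizing h with
  | nil => simp [heights] at ha
  | cons b l ih =>
    cases b with
    | true =>
      rcases List.mem_cons.mp ha with rfl | ha'
      · exact le_rfl
      · exact ih ha'
    | false => exact le_trans (Nat.le_succ h) (ih ha)

theorem mem_heights_le {P : List Bool} {h a : ℕ} (ha : a ∈ heights P h) :
    a ≤ h + P.count false := by
  induction P generalizing h with
  | nil => simp [heights] at ha
  | cons b l ih =>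
    cases b with
    | true =>
      rcases List.mem_cons.mp ha with rfl | ha'
      · simp
      · simpa [List.count_cons] using ih ha'
    | false =>
      have h2 := ih ha
      have : (false :: l).count false = l.count false + 1 := by simp
      omega

theorem heights_pairwise (P : List Bool) (h : ℕ) :
    (heights P h).Pairwise (· ≤ ·) := by
  induction P generalizing h with
  | nil => simp [heights]
  | cons b l ih =>
    cases b with
    | true =>
      refine List.pairwise_cons.mpr ⟨fun a ha => le_of_mem_heights ha, ih h⟩
    | false => exact ih (h + 1)

theorem heights_getD_bound (P : List Bool) (h : ℕ) :
    ∀ j < (heights P h).length, (heights P h).getD j 0 + j + 1 ≤ P.length + h := by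
  induction P generalizing h with
  | nil => simp [heights]
  | cons b l ih =>
    cases b with
    | true =>
      intro j hj
      cases j with
      | zero => simp [heights]
      | succ j =>
        simp only [heights, List.getD_cons_succ, List.length_cons]
        simp only [heights, List.length_cons] at hj
        have := ih h j (by omega)
        omega
    | false =>
      intro j hj
      simp only [heights] at hj ⊢
      have := ih (h + 1) j hj
      simp only [List.length_cons]
      omega

theorem heights_append_true (P : List Bool) (h : ℕ) :
    heights (P ++ [true]) h = heights P h ++ [h + P.count false] := by
  induction P generalizing h with
  | nil => simp [heights]
  | cons b l ih =>
    cases b with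
    | false =>
      rw [List.cons_append, heights_cons_false, heights_cons_false, ih]
      have : (false :: l).count false = l.count false + 1 := by simp
      rw [this]
      congr 2
      omega
    | true =>
      rw [List.cons_append, heights_cons_true, heights_cons_true, ih, List.cons_append]
      have : (true :: l).count false = l.count false := by simp
      rw [this]

theorem heights_append_false (P : List Bool) (h : ℕ) :
    heights (P ++ [false]) h = heights P h := by
  induction P generalizing h with
  | nil => simp [heights]
  | cons b l ih => cases b <;> simp [heights, ih]

theorem heights_inj {P Q : List Bool} {h : ℕ} (hl : P.length = Q.length)
    (he : heights P h = heights Q h) : P = Q := by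
  induction P generalizing Q h with
  | nil => cases Q <;> simp_all
  | cons a l ih =>
    cases Q with
    | nil => simp at hl
    | cons b m =>
      simp only [List.length_cons, Nat.succ_inj] at hl
      cases a with
      | false =>
        cases b with
        | false =>
          rw [heights_cons_false, heights_cons_false] at he
          simpa using ih hl he
        | true =>
          exfalso
          rw [heights_cons_false, heights_cons_true] at he
          have : h ∈ heights l (h + 1) := by rw [he]; exact List.mem_cons_self
          have := le_of_mem_heights this
          omega
      | true =>
        cases b with
        | false =>
          exfalso
          rw [heights_cons_true, heights_cons_false] at he
          have : h ∈ heights m (h + 1) := by rw [← he]; exact List.mem_cons_self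
          have := le_of_mem_heights this
          omega
        | true =>
          rw [heights_cons_true, heights_cons_true] at he
          simp only [List.cons.injEq] at he
          simpa using ih hl he.2

theorem heights_replicate_false (k h : ℕ) : heights (List.replicate k false) h = [] := by
  induction k generalizing h with
  | zero => simp [heights]
  | succ n ih => simpa [List.replicate_succ, heights] using ih (h + 1)

theorem heights_replicate_append (k : ℕ) (P : List Bool) (h : ℕ) :
    heights (List.replicate k false ++ P) h = heights P (h + k) := by
  induction k generalizing h with
  | zero => simp
  | succ n ih =>
    rw [List.replicate_succ, List.cons_append, heights_cons_false, ih]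
    congr 1
    omega

theorem heights_unheights {u : List ℕ} {h b : ℕ} (hp : u.Pairwise (· ≤ ·))
    (hlb : ∀ a ∈ u, h ≤ a) (hub : ∀ a ∈ u, a ≤ b) :
    heights (unheights u h b) h = u := by
  induction u generalizing h with
  | nil => simp [unheights, heights_replicate_false]
  | cons a l ih =>
    have hha : h ≤ a := hlb a (List.mem_cons_self)
    simp only [unheights]
    rw [heights_replicate_append]
    have : h + (a - h) = a := by omega
    rw [this]
    simp only [heights]
    congr 1
    exact ih (List.pairwise_cons.mp hp).2 (fun x hx => (List.pairwise_cons.mp hp).1 x hx)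
      (fun x hx => hub x (List.mem_cons_of_mem _ hx))

theorem count_true_unheights (u : List ℕ) (h b : ℕ) :
    (unheights u h b).count true = u.length := by
  induction u generalizing h with
  | nil => simp [unheights, List.count_replicate]
  | cons a l ih => simp [unheights, List.count_append, List.count_replicate, ih, List.count_cons]

theorem count_false_unheights {u : List ℕ} {h b : ℕ} (hp : u.Pairwise (· ≤ ·))
    (hlb : ∀ a ∈ u, h ≤ a) (hub : ∀ a ∈ u, a ≤ b) (hhb : h ≤ b) :
    (unheights u h b).count false = b - h := by
  induction u generalizing h with
  | nil => simp [unheights, List.count_replicate]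
  | cons a l ih =>
    have hha : h ≤ a := hlb a (List.mem_cons_self)
    have hab : a ≤ b := hub a (List.mem_cons_self)
    simp only [unheights, List.count_append, List.count_replicate, List.count_cons]
    rw [ih (List.pairwise_cons.mp hp).2 (fun x hx => (List.pairwise_cons.mp hp).1 x hx)
      (fun x hx => hub x (List.mem_cons_of_mem _ hx)) hab]
    simp
    omega

end UBaux
namespace UBaux

theorem count_true_add_count_false (P : List Bool) :
    P.count true + P.count false = P.length := by
  induction P with
  | nil => simp
  | cons b l ih => cases b <;> simp [List.count_cons] <;> omega

theorem counts_map (w : List BStep) :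
    (w.map xstep).count true = w.count BStep.D + w.count BStep.H1 ∧
    (w.map xstep).count false = w.count BStep.U + w.count BStep.H2 ∧
    (w.map qstep).count true = w.count BStep.U + w.count BStep.H1 ∧
    (w.map qstep).count false = w.count BStep.D + w.count BStep.H2 := by
  induction w with
  | nil => simp
  | cons s l ih =>
    obtain ⟨h1, h2, h3, h4⟩ := ih
    cases s <;>
      simp [xstep, qstep, List.count_cons, h1, h2, h3, h4] <;> omega

theorem step_inj {a b : BStep} (h1 : xstep a = xstep b) (h2 : qstep a = qstep b) : a = b := by
  cases a <;> cases b <;> simp_all [xstep, qstep]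

theorem eq_of_map_eq : ∀ {w1 w2 : List BStep}, w1.map xstep = w2.map xstep →
    w1.map qstep = w2.map qstep → w1 = w2
  | [], [], _, _ => rfl
  | [], _ :: _, h, _ => by simp at h
  | _ :: _, [], h, _ => by simp at h
  | a :: l1, b :: l2, h1, h2 => by
    simp only [List.map_cons, List.cons.injEq] at h1 h2
    exact by rw [step_inj h1.1 h2.1, eq_of_map_eq h1.2 h2.2]

theorem map_xstep_zipWith : ∀ {P Q : List Bool}, P.length = Q.length →
    (List.zipWith decode P Q).map xstep = P
  | [], [], _ => rfl
  | [], _ :: _, h => by simp at h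
  | _ :: _, [], h => by simp at h
  | a :: l1, b :: l2, h => by
    simp only [List.length_cons, Nat.succ_inj] at h
    simp only [List.zipWith_cons_cons, List.map_cons, map_xstep_zipWith h]
    congr 1
    cases a <;> cases b <;> rfl

theorem map_qstep_zipWith : ∀ {P Q : List Bool}, P.length = Q.length →
    (List.zipWith decode P Q).map qstep = Q
  | [], [], _ => rfl
  | [], _ :: _, h => by simp at h
  | _ :: _, [], h => by simp at h
  | a :: l1, b :: l2, h => by
    simp only [List.length_cons, Nat.succ_inj] at h
    simp only [List.zipWith_cons_cons, List.map_cons, map_qstep_zipWith h]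
    congr 1
    cases a <;> cases b <;> rfl

theorem h1zero_append (w : List BStep) (s : BStep) :
    h1zero (w ++ [s]) = h1zero w +
      if s = BStep.H1 ∧ w.count BStep.U = w.count BStep.D then 1 else 0 := by
  unfold h1zero
  have hlen : (w ++ [s]).length = w.length + 1 := by simp
  rw [hlen, Finset.range_add_one, Finset.filter_insert]
  have hget : (w ++ [s]).getD w.length BStep.U = s := by
    rw [List.getD_append_right _ _ _ _ le_rfl, Nat.sub_self, List.getD_cons_zero]
  have htake : (w ++ [s]).take w.length = w := List.take_left
  rw [hget, htake]
  have hgoal : ((Finset.range w.length).filter fun i =>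
      (w ++ [s]).getD i BStep.U = BStep.H1 ∧
        ((w ++ [s]).take i).count BStep.U = ((w ++ [s]).take i).count BStep.D)
      = (Finset.range w.length).filter fun i =>
      w.getD i BStep.U = BStep.H1 ∧ (w.take i).count BStep.U = (w.take i).count BStep.D := by
    apply Finset.filter_congr
    intro i hi
    rw [Finset.mem_range] at hi
    rw [List.getD_append _ _ _ _ hi, List.take_append_of_le_length (le_of_lt hi)]
  by_cases hc : s = BStep.H1 ∧ w.count BStep.U = w.count BStep.D
  · rw [if_pos hc, if_pos hc,
      Finset.card_insert_of_notMem (by simp), hgoal]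
  · rw [if_neg hc, if_neg hc, hgoal, add_zero]

theorem getD_append_self (u : List ℕ) (α : ℕ) : (u ++ [α]).getD u.length 0 = α := by
  rw [List.getD_append_right _ _ _ _ le_rfl, Nat.sub_self, List.getD_cons_zero]

theorem eqcount_append_left {u v : List ℕ} (α : ℕ) (h : v.length ≤ u.length) :
    eqcount (u ++ [α]) v = eqcount u v := by
  unfold eqcount
  have hm : min (u ++ [α]).length v.length = min u.length v.length := by
    simp only [List.length_append, List.length_cons, List.length_nil]
    omega
  rw [hm]
  congr 1
  apply Finset.filter_congr
  intro j hj
  rw [Finset.mem_range] at hj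
  rw [List.getD_append _ _ _ _ (by omega)]

theorem eqcount_append_right {u v : List ℕ} (β : ℕ) (h : u.length ≤ v.length) :
    eqcount u (v ++ [β]) = eqcount u v := by
  unfold eqcount
  have hm : min u.length (v ++ [β]).length = min u.length v.length := by
    simp only [List.length_append, List.length_cons, List.length_nil]
    omega
  rw [hm]
  congr 1
  apply Finset.filter_congr
  intro j hj
  rw [Finset.mem_range] at hj
  rw [List.getD_append _ _ _ _ (by omega)]

theorem eqcount_append_lt_left {u v : List ℕ} (α : ℕ) (h : u.length < v.length) :
    eqcount (u ++ [α]) v = eqcount u v + if α = v.getD u.length 0 then 1 else 0 := by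
  unfold eqcount
  have hm : min (u ++ [α]).length v.length = u.length + 1 := by
    simp only [List.length_append, List.length_cons, List.length_nil]
    omega
  have hm2 : min u.length v.length = u.length := by omega
  rw [hm, hm2, Finset.range_add_one, Finset.filter_insert]
  have hgoal : ((Finset.range u.length).filter fun j =>
      (u ++ [α]).getD j 0 = v.getD j 0) = (Finset.range u.length).filter fun j =>
      u.getD j 0 = v.getD j 0 := by
    apply Finset.filter_congr
    intro j hj
    rw [Finset.mem_range] at hj
    rw [List.getD_append _ _ _ _ hj]
  rw [getD_append_self]
  by_cases hc : α = v.getD u.length 0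
  · rw [if_pos hc, if_pos hc, Finset.card_insert_of_notMem (by simp), hgoal]
  · rw [if_neg hc, if_neg hc, hgoal, add_zero]

theorem eqcount_append_lt_right {u v : List ℕ} (β : ℕ) (h : v.length < u.length) :
    eqcount u (v ++ [β]) = eqcount u v + if u.getD v.length 0 = β then 1 else 0 := by
  unfold eqcount
  have hm : min u.length (v ++ [β]).length = v.length + 1 := by
    simp only [List.length_append, List.length_cons, List.length_nil]
    omega
  have hm2 : min u.length v.length = v.length := by omega
  rw [hm, hm2, Finset.range_add_one, Finset.filter_insert]
  have hgoal : ((Finset.range v.length).filter fun j =>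
      u.getD j 0 = (v ++ [β]).getD j 0) = (Finset.range v.length).filter fun j =>
      u.getD j 0 = v.getD j 0 := by
    apply Finset.filter_congr
    intro j hj
    rw [Finset.mem_range] at hj
    rw [List.getD_append _ _ _ _ hj]
  rw [getD_append_self]
  by_cases hc : u.getD v.length 0 = β
  · rw [if_pos hc, if_pos hc, Finset.card_insert_of_notMem (by simp), hgoal]
  · rw [if_neg hc, if_neg hc, hgoal, add_zero]

theorem eqcount_append_both {u v : List ℕ} (α β : ℕ) (h : u.length = v.length) :
    eqcount (u ++ [α]) (v ++ [β]) = eqcount u v + if α = β then 1 else 0 := by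
  rw [eqcount_append_lt_right β (by simp only [List.length_append, List.length_cons, List.length_nil]; omega)]
  rw [eqcount_append_left α (le_of_eq h.symm)]
  rw [← h, getD_append_self]

end UBaux
namespace UBaux

theorem heights_getD_lt {P Q : List Bool} (hlen : P.length = Q.length)
    (hlt : (heights P 1).length < (heights Q 1).length) :
    (heights Q 1).getD (heights P 1).length 0 < 1 + P.count false := by
  have hb := heights_getD_bound Q 1 (heights P 1).length hlt
  have hc := count_true_add_count_false P
  have h1 := heights_length P 1
  have h2 := heights_length Q 1
  omega

theorem h1zero_eq_eqcount (w : List BStep) :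
    h1zero w = eqcount (heights (w.map xstep) 1) (heights (w.map qstep) 1) := by
  induction w using List.reverseRecOn with
  | nil => simp [h1zero, eqcount, heights]
  | append_singleton w s ih =>
    rw [h1zero_append, List.map_append, List.map_append]
    obtain ⟨c1, c2, c3, c4⟩ := counts_map w
    have hulen := heights_length (w.map xstep) 1
    have hvlen := heights_length (w.map qstep) 1
    have hPQ : (w.map xstep).length = (w.map qstep).length := by simp
    have hQP : (w.map qstep).length = (w.map xstep).length := hPQ.symm
    cases s with
    | H1 =>
      have hx : List.map xstep [BStep.H1] = [true] := rfl
      have hq : List.map qstep [BStep.H1] = [true] := rfl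
      rw [hx, hq, heights_append_true, heights_append_true]
      rcases Nat.lt_trichotomy (heights (w.map xstep) 1).length
          (heights (w.map qstep) 1).length with hlt | heq | hgt
      · rw [eqcount_append_right _ (by
          simp only [List.length_append, List.length_cons, List.length_nil]; omega)]
        rw [eqcount_append_lt_left _ hlt]
        have hB := heights_getD_lt hPQ hlt
        rw [if_neg (by first | (rintro ⟨-, h⟩; omega) | omega), if_neg (by first | (rintro ⟨-, h⟩; omega) | omega), add_zero, add_zero]
        exact ih
      · rw [eqcount_append_both _ _ heq]
        have hud : w.count BStep.U = w.count BStep.D := by omega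
        rw [if_pos ⟨rfl, hud⟩, if_pos (by omega), ih]
      · rw [eqcount_append_left _ (by
          simp only [List.length_append, List.length_cons, List.length_nil]; omega)]
        rw [eqcount_append_lt_right _ hgt]
        have hB := heights_getD_lt hQP hgt
        rw [if_neg (by first | (rintro ⟨-, h⟩; omega) | omega), if_neg (by first | (rintro ⟨-, h⟩; omega) | omega), add_zero, add_zero]
        exact ih
    | D =>
      have hx : List.map xstep [BStep.D] = [true] := rfl
      have hq : List.map qstep [BStep.D] = [false] := rfl
      rw [hx, hq, heights_append_true, heights_append_false,
        if_neg (by rintro ⟨h, -⟩; exact BStep.noConfusion h), add_zero]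
      rcases le_or_gt (heights (w.map qstep) 1).length
          (heights (w.map xstep) 1).length with hle | hlt
      · rw [eqcount_append_left _ hle]; exact ih
      · rw [eqcount_append_lt_left _ hlt]
        have hB := heights_getD_lt hPQ hlt
        rw [if_neg (by omega), add_zero]
        exact ih
    | U =>
      have hx : List.map xstep [BStep.U] = [false] := rfl
      have hq : List.map qstep [BStep.U] = [true] := rfl
      rw [hx, hq, heights_append_false, heights_append_true,
        if_neg (by rintro ⟨h, -⟩; exact BStep.noConfusion h), add_zero]
      rcases le_or_gt (heights (w.map xstep) 1).length
          (heights (w.map qstep) 1).length with hle | hlt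
      · rw [eqcount_append_right _ hle]; exact ih
      · rw [eqcount_append_lt_right _ hlt]
        have hB := heights_getD_lt hQP hlt
        rw [if_neg (by omega), add_zero]
        exact ih
    | H2 =>
      have hx : List.map xstep [BStep.H2] = [false] := rfl
      have hq : List.map qstep [BStep.H2] = [false] := rfl
      rw [hx, hq, heights_append_false, heights_append_false,
        if_neg (by rintro ⟨h, -⟩; exact BStep.noConfusion h), add_zero]
      exact ih

end UBaux
namespace UBaux

def WordsSet (r β c : ℕ) : Set (List BStep) :=
  {w | IsBicoloredGrandMotzkin w ∧ w.count BStep.D + w.count BStep.H1 = r ∧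
    w.count BStep.U + w.count BStep.H2 = β ∧ h1zero w = c}

def PairsSet (r b c : ℕ) : Set (List ℕ × List ℕ) :=
  {p | p.1.length = r ∧ p.2.length = r ∧ p.1.Pairwise (· ≤ ·) ∧ p.2.Pairwise (· ≤ ·) ∧
    (∀ a ∈ p.1, 1 ≤ a ∧ a ≤ b) ∧ (∀ a ∈ p.2, 1 ≤ a ∧ a ≤ b) ∧ eqcount p.1 p.2 = c}

def wtp (w : List BStep) : List ℕ × List ℕ :=
  (heights (w.map xstep) 1, heights (w.map qstep) 1)

theorem length_words {w : List BStep} {r β c : ℕ} (hw : w ∈ WordsSet r β c) :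
    w.length = r + β := by
  obtain ⟨hgm, h1, h2, -⟩ := hw
  obtain ⟨c1, c2, -, -⟩ := counts_map w
  have := count_true_add_count_false (w.map xstep)
  have : (w.map xstep).length = w.length := by simp
  omega

theorem wtp_image (r β c : ℕ) : wtp '' WordsSet r β c = PairsSet r (β + 1) c := by
  ext p
  constructor
  · rintro ⟨w, hw, rfl⟩
    obtain ⟨hgm, h1, h2, h3⟩ := hw
    obtain ⟨c1, c2, c3, c4⟩ := counts_map w
    have hul := heights_length (w.map xstep) 1
    have hvl := heights_length (w.map qstep) 1
    have hgm' : w.count BStep.U = w.count BStep.D := hgm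
    refine ⟨by rw [wtp]; simp only; omega, by rw [wtp]; simp only; omega,
      heights_pairwise _ _, heights_pairwise _ _, ?_, ?_, ?_⟩
    · intro a ha
      have h5 := mem_heights_le ha
      rw [c2] at h5
      exact ⟨le_of_mem_heights ha, by omega⟩
    · intro a ha
      have h5 := mem_heights_le ha
      rw [c4] at h5
      exact ⟨le_of_mem_heights ha, by omega⟩
    · rw [wtp]
      simp only
      rw [← h1zero_eq_eqcount w, h3]
  · rintro ⟨hl1, hl2, hp1, hp2, hb1, hb2, hec⟩
    set P := unheights p.1 1 (β + 1) with hP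
    set Q := unheights p.2 1 (β + 1) with hQ
    have hctP : P.count true = r := by rw [hP, count_true_unheights, hl1]
    have hctQ : Q.count true = r := by rw [hQ, count_true_unheights, hl2]
    have hcfP : P.count false = β := by
      rw [hP, count_false_unheights hp1 (fun a ha => (hb1 a ha).1)
        (fun a ha => (hb1 a ha).2) (by omega)]
      omega
    have hcfQ : Q.count false = β := by
      rw [hQ, count_false_unheights hp2 (fun a ha => (hb2 a ha).1)
        (fun a ha => (hb2 a ha).2) (by omega)]
      omega
    have hPl := count_true_add_count_false P
    have hQl := count_true_add_count_false Q
    have hPQ : P.length = Q.length := by omega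
    set w := List.zipWith decode P Q with hwdef
    have hmx : w.map xstep = P := map_xstep_zipWith hPQ
    have hmq : w.map qstep = Q := map_qstep_zipWith hPQ
    obtain ⟨c1, c2, c3, c4⟩ := counts_map w
    rw [hmx] at c1 c2
    rw [hmq] at c3 c4
    have hhu : heights P 1 = p.1 :=
      heights_unheights hp1 (fun a ha => (hb1 a ha).1) (fun a ha => (hb1 a ha).2)
    have hhv : heights Q 1 = p.2 :=
      heights_unheights hp2 (fun a ha => (hb2 a ha).1) (fun a ha => (hb2 a ha).2)
    refine ⟨w, ⟨?_, by omega, by omega, ?_⟩, ?_⟩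
    · show w.count BStep.U = w.count BStep.D
      omega
    · rw [h1zero_eq_eqcount w, hmx, hmq, hhu, hhv, hec]
    · rw [wtp, hmx, hmq, hhu, hhv]

theorem wtp_injOn (r β c : ℕ) : Set.InjOn wtp (WordsSet r β c) := by
  intro w1 hw1 w2 hw2 heq
  have hl1 := length_words hw1
  have hl2 := length_words hw2
  have hP : (w1.map xstep).length = (w2.map xstep).length := by simp [hl1, hl2]
  have hQ : (w1.map qstep).length = (w2.map qstep).length := by simp [hl1, hl2]
  rw [wtp, wtp, Prod.mk.injEq] at heq
  exact eq_of_map_eq (heights_inj hP heq.1) (heights_inj hQ heq.2)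

theorem ncard_words (r β c : ℕ) :
    (WordsSet r β c).ncard = (PairsSet r (β + 1) c).ncard := by
  rw [← wtp_image, Set.ncard_image_of_injOn (wtp_injOn r β c)]

end UBaux
namespace UBaux

def UBSet (a b c : ℕ) : Set (List ℕ) :=
  {L | IsUB L ∧ L.length = a ∧ maxComp L = b ∧ dsComp L = c}

theorem list_eq_of_getD {l₁ l₂ : List ℕ} (h : l₁.length = l₂.length)
    (hg : ∀ i, i < l₁.length → l₁.getD i 0 = l₂.getD i 0) : l₁ = l₂ := by
  apply List.ext_getElem h
  intro n h₁ h₂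
  have := hg n h₁
  rwa [List.getD_eq_getElem _ _ h₁, List.getD_eq_getElem _ _ h₂] at this

theorem getD_reverse {l : List ℕ} {j : ℕ} (h : j < l.length) :
    l.reverse.getD j 0 = l.getD (l.length - 1 - j) 0 := by
  have h' : j < l.reverse.length := by simpa using h
  rw [List.getD_eq_getElem _ _ h', List.getD_eq_getElem _ _ (by omega),
    List.getElem_reverse]

theorem le_maxComp {L : List ℕ} {a : ℕ} (ha : a ∈ L) : a ≤ maxComp L := by
  induction L with
  | nil => simp at ha
  | cons x l ih =>
    rcases List.mem_cons.mp ha with rfl | h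
    · exact le_max_left _ _
    · exact le_trans (ih h) (le_max_right _ _)

theorem maxComp_mem {L : List ℕ} (h : L ≠ []) : maxComp L ∈ L := by
  induction L with
  | nil => simp at h
  | cons x l ih =>
    rcases eq_or_ne l [] with rfl | hl
    · simp [maxComp]
    · have hm : maxComp (x :: l) = max x (maxComp l) := rfl
      rcases max_cases x (maxComp l) with ⟨h1, -⟩ | ⟨h1, -⟩
      · rw [hm, h1]; exact List.mem_cons_self
      · rw [hm, h1]; exact List.mem_cons_of_mem _ (ih hl)

theorem maxComp_eq {L : List ℕ} {b : ℕ} (hmem : b ∈ L) (hub : ∀ a ∈ L, a ≤ b) :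
    maxComp L = b :=
  le_antisymm (hub _ (maxComp_mem (by rintro rfl; simp at hmem))) (le_maxComp hmem)

theorem pairwise_take_iff {L : List ℕ} {m : ℕ} (hm : m ≤ L.length) :
    (L.take m).Pairwise (· ≤ ·) ↔ ∀ i, i + 2 ≤ m → L.getD i 0 ≤ L.getD (i + 1) 0 := by
  have hlen : (L.take m).length = m := by rw [List.length_take]; omega
  rw [← List.isChain_iff_pairwise, List.isChain_iff_getElem]
  constructor
  · intro h i hi
    have hlt : i + 1 < (L.take m).length := by omega
    have h2 := h i hlt
    rw [List.getElem_take, List.getElem_take] at h2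
    rwa [List.getD_eq_getElem _ _ (by omega), List.getD_eq_getElem _ _ (by omega)]
  · intro h i hlt
    rw [List.getElem_take, List.getElem_take]
    have h2 := h i (by omega)
    rwa [List.getD_eq_getElem _ _ (by omega), List.getD_eq_getElem _ _ (by omega)] at h2

theorem get_eq_getD (l : List ℕ) (i : ℕ) (h : i < l.length) : l.get ⟨i, h⟩ = l.getD i 0 := by
  rw [List.get_eq_getElem]
  exact (List.getD_eq_getElem l 0 h).symm

theorem getElem_eq_getD' (l : List ℕ) (i : ℕ) (h : i < l.length) : l[i] = l.getD i 0 :=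
  (List.getD_eq_getElem l 0 h).symm

theorem getD_drop (L : List ℕ) (d j : ℕ) (h : d + j < L.length) :
    (L.drop d).getD j 0 = L.getD (d + j) 0 := by
  rw [List.getD_eq_getElem _ _ (by rw [List.length_drop]; omega),
    List.getD_eq_getElem _ _ h, List.getElem_drop]

theorem pairwise_drop_iff {L : List ℕ} {d : ℕ} :
    ((L.drop d).reverse).Pairwise (· ≤ ·) ↔
      ∀ i, d ≤ i → i + 2 ≤ L.length → L.getD (i + 1) 0 ≤ L.getD i 0 := by
  have hlen : (L.drop d).length = L.length - d := by rw [List.length_drop]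
  rw [List.pairwise_reverse, ← List.isChain_iff_pairwise, List.isChain_iff_getElem]
  constructor
  · intro h i hd hi
    have hlt : i - d + 1 < (L.drop d).length := by omega
    have h2 := h (i - d) hlt
    rw [getElem_eq_getD', getElem_eq_getD', getD_drop _ _ _ (by omega), getD_drop _ _ _ (by omega)] at h2
    have e1 : d + (i - d) = i := by omega
    have e2 : d + (i - d + 1) = i + 1 := by omega
    rw [e1, e2] at h2
    exact h2
  · intro h i hlt
    rw [getElem_eq_getD', getElem_eq_getD', getD_drop _ _ _ (by omega), getD_drop _ _ _ (by omega)]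
    have h2 := h (d + i) (by omega) (by omega)
    have e2 : d + (i + 1) = d + i + 1 := by omega
    rw [e2]
    exact h2

theorem isUB_iff {L : List ℕ} (hL : L ≠ []) :
    IsUB L ↔ (∀ a ∈ L, 1 ≤ a) ∧
      (L.take ((L.length + 1) / 2)).Pairwise (· ≤ ·) ∧
      ((L.drop ((L.length + 2) / 2 - 1)).reverse).Pairwise (· ≤ ·) := by
  have hlen : 1 ≤ L.length := List.length_pos_iff.mpr hL
  rw [IsUB, pairwise_take_iff (by omega), pairwise_drop_iff]
  constructor
  · rintro ⟨-, h1, h2, h3⟩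
    exact ⟨h1, h2, fun i hd hi => h3 i (by omega) hi⟩
  · rintro ⟨h1, h2, h3⟩
    exact ⟨hL, h1, h2, fun i hd hi => h3 i (by omega) hi⟩

theorem dsComp_odd {u v : List ℕ} {m r : ℕ} (hu : u.length = r) (hv : v.length = r) :
    dsComp (u ++ m :: v.reverse) = eqcount u v := by
  rw [dsComp, eqcount]
  have hLlen : (u ++ m :: v.reverse).length = 2 * r + 1 := by
    simp [hu, hv]; omega
  rw [hLlen, hu, hv, min_self]
  have h2 : (2 * r + 1) / 2 = r := by omega
  rw [h2]
  congr 1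
  apply Finset.filter_congr
  intro i hi
  rw [Finset.mem_range] at hi
  have e1 : (u ++ m :: v.reverse).getD i 0 = u.getD i 0 :=
    List.getD_append _ _ _ _ (by omega)
  have e2 : (u ++ m :: v.reverse).getD (2 * r + 1 - 1 - i) 0 = v.getD i 0 := by
    rw [List.getD_append_right _ _ _ _ (by omega), hu]
    have e3 : 2 * r + 1 - 1 - i - r = (r - i - 1) + 1 := by omega
    rw [e3, List.getD_cons_succ, getD_reverse (by omega), hv]
    congr 1
    omega
  rw [e1, e2]

theorem dsComp_even {u v : List ℕ} {r : ℕ} (hu : u.length = r) (hv : v.length = r) :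
    dsComp (u ++ v.reverse) = eqcount u v := by
  rw [dsComp, eqcount]
  have hLlen : (u ++ v.reverse).length = 2 * r := by simp [hu, hv]; omega
  rw [hLlen, hu, hv, min_self]
  have h2 : 2 * r / 2 = r := by omega
  rw [h2]
  congr 1
  apply Finset.filter_congr
  intro i hi
  rw [Finset.mem_range] at hi
  have e1 : (u ++ v.reverse).getD i 0 = u.getD i 0 :=
    List.getD_append _ _ _ _ (by omega)
  have e2 : (u ++ v.reverse).getD (2 * r - 1 - i) 0 = v.getD i 0 := by
    rw [List.getD_append_right _ _ _ _ (by omega), hu]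
    rw [getD_reverse (by omega), hv]
    congr 1
    omega
  rw [e1, e2]

theorem mem_UBSet_odd {u v : List ℕ} {m r b c : ℕ} (hu : u.length = r) (hv : v.length = r) :
    (u ++ m :: v.reverse) ∈ UBSet (2 * r + 1) b c ↔
      ((u, v) ∈ PairsSet r b c ∧ m = b ∧ 1 ≤ b) := by
  have hLlen : (u ++ m :: v.reverse).length = 2 * r + 1 := by simp [hu, hv]; omega
  have hne : (u ++ m :: v.reverse) ≠ [] := by
    intro h; rw [h] at hLlen; simp at hLlen
  have hsplit : u ++ m :: v.reverse = (u ++ [m]) ++ v.reverse := by simp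
  have htake : (u ++ m :: v.reverse).take (((u ++ m :: v.reverse).length + 1) / 2)
      = u ++ [m] := by
    rw [hLlen]
    have h3 : (2 * r + 1 + 1) / 2 = r + 1 := by omega
    rw [h3, hsplit, List.take_left' (by simp [hu])]
  have hdrop : (u ++ m :: v.reverse).drop (((u ++ m :: v.reverse).length + 2) / 2 - 1)
      = m :: v.reverse := by
    rw [hLlen]
    have h3 : (2 * r + 1 + 2) / 2 - 1 = r := by omega
    rw [h3, List.drop_left' hu]
  have hrev : (m :: v.reverse).reverse = v ++ [m] := by simp
  constructor
  · rintro ⟨hub, hlen, hmax, hds⟩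
    rw [isUB_iff hne] at hub
    obtain ⟨h1, h2, h3⟩ := hub
    rw [htake] at h2
    rw [hdrop, hrev] at h3
    rw [List.pairwise_append] at h2 h3
    have hum : ∀ x ∈ u, x ≤ m := fun x hx =>
      h2.2.2 x hx m (List.mem_singleton.mpr rfl)
    have hvm : ∀ x ∈ v, x ≤ m := fun x hx =>
      h3.2.2 x hx m (List.mem_singleton.mpr rfl)
    have hmax' : maxComp (u ++ m :: v.reverse) = m := by
      apply maxComp_eq (List.mem_append_right _ (List.mem_cons_self))
      intro a ha
      rcases List.mem_append.mp ha with h | h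
      · exact hum a h
      · rcases List.mem_cons.mp h with rfl | h'
        · exact le_rfl
        · exact hvm a (List.mem_reverse.mp h')
    have hmb : m = b := by rw [hmax'] at hmax; exact hmax
    have h1b : 1 ≤ b := by
      rw [← hmb]
      exact h1 m (List.mem_append_right _ (List.mem_cons_self))
    refine ⟨⟨hu, hv, h2.1, h3.1, ?_, ?_, ?_⟩, hmb, h1b⟩
    · intro a ha
      exact ⟨h1 a (List.mem_append_left _ ha), hmb ▸ hum a ha⟩
    · intro a ha
      refine ⟨h1 a ?_, hmb ▸ hvm a ha⟩
      exact List.mem_append_right _ (List.mem_cons_of_mem _ (List.mem_reverse.mpr ha))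
    · rw [← dsComp_odd hu hv, hds]
  · rintro ⟨⟨hu', hv', hp1, hp2, hb1, hb2, hec⟩, hmb, h1b⟩
    subst hmb
    refine ⟨?_, hLlen, ?_, ?_⟩
    · rw [isUB_iff hne]
      refine ⟨?_, ?_, ?_⟩
      · intro a ha
        rcases List.mem_append.mp ha with h | h
        · exact (hb1 a h).1
        · rcases List.mem_cons.mp h with rfl | h'
          · exact h1b
          · exact (hb2 a (List.mem_reverse.mp h')).1
      · rw [htake, List.pairwise_append]
        exact ⟨hp1, List.pairwise_singleton _ _, fun a ha x hx => by
          rw [List.mem_singleton.mp hx]; exact (hb1 a ha).2⟩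
      · rw [hdrop, hrev, List.pairwise_append]
        exact ⟨hp2, List.pairwise_singleton _ _, fun a ha x hx => by
          rw [List.mem_singleton.mp hx]; exact (hb2 a ha).2⟩
    · apply maxComp_eq (List.mem_append_right _ (List.mem_cons_self))
      intro a ha
      rcases List.mem_append.mp ha with h | h
      · exact (hb1 a h).2
      · rcases List.mem_cons.mp h with rfl | h'
        · exact le_rfl
        · exact (hb2 a (List.mem_reverse.mp h')).2
    · rw [dsComp_odd hu hv, hec]

theorem mem_UBSet_even {u v : List ℕ} {r b c : ℕ} (hu : u.length = r) (hv : v.length = r)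
    (hr : 1 ≤ r) :
    (u ++ v.reverse) ∈ UBSet (2 * r) b c ↔
      ((u, v) ∈ PairsSet r b c ∧ (b ∈ u ∨ b ∈ v) ∧ 1 ≤ b) := by
  have hLlen : (u ++ v.reverse).length = 2 * r := by simp [hu, hv]; omega
  have hne : (u ++ v.reverse) ≠ [] := by
    intro h; rw [h] at hLlen; simp at hLlen; omega
  have htake : (u ++ v.reverse).take (((u ++ v.reverse).length + 1) / 2) = u := by
    rw [hLlen]
    have h3 : (2 * r + 1) / 2 = r := by omega
    rw [h3, List.take_left' hu]
  have hdrop : (u ++ v.reverse).drop (((u ++ v.reverse).length + 2) / 2 - 1) = v.reverse := by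
    rw [hLlen]
    have h3 : (2 * r + 2) / 2 - 1 = r := by omega
    rw [h3, List.drop_left' hu]
  constructor
  · rintro ⟨hub, hlen, hmax, hds⟩
    rw [isUB_iff hne] at hub
    obtain ⟨h1, h2, h3⟩ := hub
    rw [htake] at h2
    rw [hdrop, List.reverse_reverse] at h3
    have hball : ∀ a ∈ u ++ v.reverse, a ≤ b := fun a ha => hmax ▸ le_maxComp ha
    have hbm : b ∈ u ++ v.reverse := hmax ▸ maxComp_mem hne
    have hbor : b ∈ u ∨ b ∈ v := by
      rcases List.mem_append.mp hbm with h | h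
      · exact Or.inl h
      · exact Or.inr (List.mem_reverse.mp h)
    refine ⟨⟨hu, hv, h2, h3, ?_, ?_, by rw [← dsComp_even hu hv, hds]⟩, hbor, ?_⟩
    · intro a ha
      exact ⟨h1 a (List.mem_append_left _ ha), hball a (List.mem_append_left _ ha)⟩
    · intro a ha
      have ham : a ∈ u ++ v.reverse := List.mem_append_right _ (List.mem_reverse.mpr ha)
      exact ⟨h1 a ham, hball a ham⟩
    · exact h1 b hbm
  · rintro ⟨⟨hu', hv', hp1, hp2, hb1, hb2, hec⟩, hbor, h1b⟩
    refine ⟨?_, hLlen, ?_, ?_⟩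
    · rw [isUB_iff hne]
      refine ⟨?_, by rw [htake]; exact hp1, by rw [hdrop, List.reverse_reverse]; exact hp2⟩
      intro a ha
      rcases List.mem_append.mp ha with h | h
      · exact (hb1 a h).1
      · exact (hb2 a (List.mem_reverse.mp h)).1
    · apply maxComp_eq
      · rcases hbor with h | h
        · exact List.mem_append_left _ h
        · exact List.mem_append_right _ (List.mem_reverse.mpr h)
      · intro a ha
        rcases List.mem_append.mp ha with h | h
        · exact (hb1 a h).2
        · exact (hb2 a (List.mem_reverse.mp h)).2
    · rw [dsComp_even hu hv, hec]

theorem UBSet_odd_eq {r b c : ℕ} (hb : 1 ≤ b) :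
    UBSet (2 * r + 1) b c =
      (fun p : List ℕ × List ℕ => p.1 ++ b :: p.2.reverse) '' PairsSet r b c := by
  ext L
  constructor
  · intro hL
    have hlen : L.length = 2 * r + 1 := hL.2.1
    have hu : (L.take r).length = r := by rw [List.length_take]; omega
    have hv : ((L.drop (r + 1)).reverse).length = r := by
      rw [List.length_reverse, List.length_drop]; omega
    have hm : r < L.length := by omega
    have hdec : L = L.take r ++ L[r] :: ((L.drop (r + 1)).reverse).reverse := by
      rw [List.reverse_reverse, ← List.drop_eq_getElem_cons hm, List.take_append_drop]
    rw [hdec] at hL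
    have hmem := (mem_UBSet_odd hu hv).mp hL
    refine ⟨(L.take r, (L.drop (r + 1)).reverse), hmem.1, ?_⟩
    simp only
    rw [← hmem.2.1, ← hdec]
  · rintro ⟨p, hp, rfl⟩
    exact (mem_UBSet_odd hp.1 hp.2.1).mpr ⟨hp, rfl, hb⟩

theorem mem_diff_iff {p : List ℕ × List ℕ} {r b c : ℕ}
    (hp : p ∈ PairsSet r b c) :
    p ∈ PairsSet r b c \ PairsSet r (b - 1) c ↔ (b ∈ p.1 ∨ b ∈ p.2) := by
  obtain ⟨h1, h2, h3, h4, h5, h6, h7⟩ := hp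
  constructor
  · rintro ⟨-, hnot⟩
    by_contra hcon
    push_neg at hcon
    refine hnot ⟨h1, h2, h3, h4, ?_, ?_, h7⟩
    · intro a ha
      have hle := (h5 a ha).2
      have hne : a ≠ b := fun h => hcon.1 (h ▸ ha)
      exact ⟨(h5 a ha).1, by omega⟩
    · intro a ha
      have hle := (h6 a ha).2
      have hne : a ≠ b := fun h => hcon.2 (h ▸ ha)
      exact ⟨(h6 a ha).1, by omega⟩
  · intro hor
    refine ⟨⟨h1, h2, h3, h4, h5, h6, h7⟩, fun hmem => ?_⟩
    rcases hor with h | h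
    · have hx := (hmem.2.2.2.2.1 b h).1
      have hy := (hmem.2.2.2.2.1 b h).2
      omega
    · have hx := (hmem.2.2.2.2.2.1 b h).1
      have hy := (hmem.2.2.2.2.2.1 b h).2
      omega

theorem UBSet_even_eq {r b c : ℕ} (hr : 1 ≤ r) (hb : 1 ≤ b) :
    UBSet (2 * r) b c = (fun p : List ℕ × List ℕ => p.1 ++ p.2.reverse) ''
      (PairsSet r b c \ PairsSet r (b - 1) c) := by
  ext L
  constructor
  · intro hL
    have hlen : L.length = 2 * r := hL.2.1
    have hu : (L.take r).length = r := by rw [List.length_take]; omega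
    have hv : ((L.drop r).reverse).length = r := by
      rw [List.length_reverse, List.length_drop]; omega
    have hdec : L = L.take r ++ ((L.drop r).reverse).reverse := by
      rw [List.reverse_reverse, List.take_append_drop]
    rw [hdec] at hL
    have hmem := (mem_UBSet_even hu hv hr).mp hL
    refine ⟨(L.take r, (L.drop r).reverse), (mem_diff_iff hmem.1).mpr hmem.2.1, ?_⟩
    simp only
    exact hdec.symm
  · rintro ⟨p, hp, rfl⟩
    have hp1 := hp.1
    have hbor := (mem_diff_iff hp.1).mp hp
    have h1b : 1 ≤ b := by
      rcases hbor with h | h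
      · exact (hp1.2.2.2.2.1 b h).1
      · exact (hp1.2.2.2.2.2.1 b h).1
    exact (mem_UBSet_even hp1.1 hp1.2.1 hr).mpr ⟨hp1, hbor, h1b⟩

theorem PairsSet_mono {r b c : ℕ} : PairsSet r (b - 1) c ⊆ PairsSet r b c := by
  rintro p ⟨h1, h2, h3, h4, h5, h6, h7⟩
  refine ⟨h1, h2, h3, h4, ?_, ?_, h7⟩
  · intro a ha
    have := (h5 a ha).2
    exact ⟨(h5 a ha).1, by omega⟩
  · intro a ha
    have := (h6 a ha).2
    exact ⟨(h6 a ha).1, by omega⟩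

theorem PairsSet_finite (r b c : ℕ) : (PairsSet r b c).Finite := by
  apply Set.Finite.of_finite_image (f := fun p : List ℕ × List ℕ =>
    ((fun i : Fin r => (⟨min (p.1.getD i 0) b, by omega⟩ : Fin (b + 1))),
     (fun i : Fin r => (⟨min (p.2.getD i 0) b, by omega⟩ : Fin (b + 1)))))
  · exact Set.toFinite _
  · intro p hp q hq heq
    obtain ⟨hp1, hp2, -, -, hpb1, hpb2, -⟩ := hp
    obtain ⟨hq1, hq2, -, -, hqb1, hqb2, -⟩ := hq
    rw [Prod.mk.injEq] at heq
    have key : ∀ (l₁ l₂ : List ℕ), l₁.length = r → l₂.length = r →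
        (∀ a ∈ l₁, a ≤ b) → (∀ a ∈ l₂, a ≤ b) →
        ((fun i : Fin r => (⟨min (l₁.getD i 0) b, by omega⟩ : Fin (b + 1))) =
          fun i : Fin r => (⟨min (l₂.getD i 0) b, by omega⟩ : Fin (b + 1))) → l₁ = l₂ := by
      intro l₁ l₂ hl1 hl2 hub1 hub2 hfeq
      apply list_eq_of_getD (by omega)
      intro i hi
      have h1 := congrFun hfeq ⟨i, by omega⟩
      simp only [Fin.mk.injEq] at h1
      have e1 : l₁.getD i 0 ≤ b := by
        apply hub1
        rw [List.getD_eq_getElem _ _ (by omega)]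
        exact List.getElem_mem _
      have e2 : l₂.getD i 0 ≤ b := by
        apply hub2
        rw [List.getD_eq_getElem _ _ (by omega)]
        exact List.getElem_mem _
      omega
    exact Prod.ext_iff.mpr
      ⟨key _ _ hp1 hq1 (fun a ha => (hpb1 a ha).2) (fun a ha => (hqb1 a ha).2) heq.1,
       key _ _ hp2 hq2 (fun a ha => (hpb2 a ha).2) (fun a ha => (hqb2 a ha).2) heq.2⟩

theorem ncard_UB_odd (r b c : ℕ) (hb : 1 ≤ b) :
    ((UBSet (2 * r + 1) b c).ncard : ℤ) = ((PairsSet r b c).ncard : ℤ) := by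
  rw [UBSet_odd_eq hb, Set.ncard_image_of_injOn]
  intro p hp q hq he
  simp only at he
  obtain ⟨e1, e2⟩ := List.append_inj he (by rw [hp.1, hq.1])
  simp only [List.cons.injEq, true_and] at e2
  exact Prod.ext_iff.mpr ⟨e1, List.reverse_injective e2⟩

theorem ncard_UB_even (r b c : ℕ) (hr : 1 ≤ r) (hb : 1 ≤ b) :
    ((UBSet (2 * r) b c).ncard : ℤ) =
      ((PairsSet r b c).ncard : ℤ) - ((PairsSet r (b - 1) c).ncard : ℤ) := by
  have hfin := PairsSet_finite r b c
  have hsub : PairsSet r (b - 1) c ⊆ PairsSet r b c := PairsSet_mono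
  have hle := Set.ncard_le_ncard hsub hfin
  rw [UBSet_even_eq hr hb, Set.ncard_image_of_injOn, Set.ncard_diff hsub (hfin.subset hsub)]
  · omega
  · intro p hp q hq he
    simp only at he
    obtain ⟨e1, e2⟩ := List.append_inj he (by rw [hp.1.1, hq.1.1])
    exact Prod.ext_iff.mpr ⟨e1, List.reverse_injective e2⟩

theorem eqcount_nil (v : List ℕ) : eqcount [] v = 0 := by simp [eqcount]

theorem ncard_PairsSet_zero (b c : ℕ) :
    ((PairsSet 0 b c).ncard : ℤ) = if c = 0 then 1 else 0 := by
  rcases eq_or_ne c 0 with rfl | hc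
  · rw [if_pos rfl]
    have hs : PairsSet 0 b 0 = {(([] : List ℕ), ([] : List ℕ))} := by
      ext p
      constructor
      · rintro ⟨h1, h2, -⟩
        have e1 := List.length_eq_zero_iff.mp h1
        have e2 := List.length_eq_zero_iff.mp h2
        rw [Set.mem_singleton_iff, Prod.ext_iff]
        exact ⟨e1, e2⟩
      · intro hp
        rw [Set.mem_singleton_iff] at hp
        subst hp
        exact ⟨rfl, rfl, by simp, by simp, by simp, by simp, eqcount_nil _⟩
    rw [hs, Set.ncard_singleton]
    norm_num
  · rw [if_neg hc]
    have hs : PairsSet 0 b c = ∅ := by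
      ext p
      simp only [Set.mem_empty_iff_false, iff_false]
      rintro ⟨h1, h2, -, -, -, -, h7⟩
      apply hc
      rw [← h7]
      rw [List.length_eq_zero_iff.mp h1, eqcount_nil]
    rw [hs]
    simp

theorem UBSet_height_zero (a c : ℕ) : UBSet a 0 c = ∅ := by
  ext L
  simp only [Set.mem_empty_iff_false, iff_false]
  rintro ⟨⟨hne, hge, -, -⟩, -, hmax, -⟩
  have hmem := maxComp_mem hne
  rw [hmax] at hmem
  exact absurd (hge 0 hmem) (by omega)

theorem UBSet_width_zero (b c : ℕ) : UBSet 0 b c = ∅ := by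
  ext L
  simp only [Set.mem_empty_iff_false, iff_false]
  rintro ⟨⟨hne, -⟩, hlen, -⟩
  exact hne (List.length_eq_zero_iff.mp hlen)

end UBaux
namespace UBaux

theorem PairsSet_b_zero (r c : ℕ) (hr : 1 ≤ r) : PairsSet r 0 c = ∅ := by
  ext p
  simp only [Set.mem_empty_iff_false, iff_false]
  rintro ⟨h1, -, -, -, h5, -, -⟩
  have hne : p.1 ≠ [] := by
    intro h
    rw [h] at h1
    simp at h1
    omega
  obtain ⟨x, hx⟩ := List.exists_mem_of_ne_nil _ hne
  have := h5 x hx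
  omega

theorem T_even (e : Fin 3 →₀ ℕ) (ρ : ℕ) (h0 : e 0 = 2 * ρ) :
    T e = ((PairsSet ρ (e 1 + 1) (e 2)).ncard : ℤ) := by
  have hT : T e = (({w : List BStep | IsBicoloredGrandMotzkin w ∧
      2 * (w.count BStep.D + w.count BStep.H1) = e 0 ∧
      w.count BStep.U + w.count BStep.H2 = e 1 ∧ h1zero w = e 2}).ncard : ℤ) := rfl
  have hset : {w : List BStep | IsBicoloredGrandMotzkin w ∧
      2 * (w.count BStep.D + w.count BStep.H1) = e 0 ∧
      w.count BStep.U + w.count BStep.H2 = e 1 ∧ h1zero w = e 2}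
      = WordsSet ρ (e 1) (e 2) := by
    ext w
    simp only [WordsSet, Set.mem_setOf_eq, h0]
    constructor
    · rintro ⟨h1, h2, h3, h4⟩
      exact ⟨h1, by omega, h3, h4⟩
    · rintro ⟨h1, h2, h3, h4⟩
      exact ⟨h1, by omega, h3, h4⟩
  rw [hT, hset, ncard_words]

theorem T_odd (e : Fin 3 →₀ ℕ) (h0 : e 0 % 2 = 1) : T e = 0 := by
  have hT : T e = (({w : List BStep | IsBicoloredGrandMotzkin w ∧
      2 * (w.count BStep.D + w.count BStep.H1) = e 0 ∧
      w.count BStep.U + w.count BStep.H2 = e 1 ∧ h1zero w = e 2}).ncard : ℤ) := rfl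
  have hset : {w : List BStep | IsBicoloredGrandMotzkin w ∧
      2 * (w.count BStep.D + w.count BStep.H1) = e 0 ∧
      w.count BStep.U + w.count BStep.H2 = e 1 ∧ h1zero w = e 2} = ∅ := by
    ext w
    simp only [Set.mem_empty_iff_false, iff_false, Set.mem_setOf_eq]
    rintro ⟨-, h2, -, -⟩
    omega
  rw [hT, hset]
  simp

end UBaux

open UBaux Finsupp MvPowerSeries in
/-- `Σ_{B ∈ 𝒰ℬ} s^{ds(B)} x^{e(B)} y^{n(B)} = y(1+x−y)·T − y` in `ℤ[[x,y,s]]`. -/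
theorem unimodalBargraph_ds_gf :
    UBgf = MvPowerSeries.X 1 * (1 + MvPowerSeries.X 0 - MvPowerSeries.X 1) * T
      - MvPowerSeries.X 1 := by
  apply MvPowerSeries.ext
  intro d
  have hexp : (X 1 : MvPowerSeries (Fin 3) ℤ) * (1 + X 0 - X 1) * T - X 1
      = monomial (single 1 1) (1 : ℤ) * T
        + monomial (single 1 1 + single 0 1) (1 : ℤ) * T
        - monomial (single 1 1 + single 1 1) (1 : ℤ) * T
        - monomial (single 1 1) (1 : ℤ) := by
    have hx1 : (X 1 : MvPowerSeries (Fin 3) ℤ) = monomial (single 1 1) 1 := X_def 1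
    have hx10 : (X 1 : MvPowerSeries (Fin 3) ℤ) * X 0
        = monomial (single 1 1 + single 0 1) (1 : ℤ) := by
      rw [X_def, X_def, monomial_mul_monomial, one_mul]
    have hx11 : (X 1 : MvPowerSeries (Fin 3) ℤ) * X 1
        = monomial (single 1 1 + single 1 1) (1 : ℤ) := by
      rw [X_def, monomial_mul_monomial, one_mul]
    have hring : (X 1 : MvPowerSeries (Fin 3) ℤ) * (1 + X 0 - X 1) * T - X 1
        = X 1 * T + (X 1 * X 0) * T - (X 1 * X 1) * T - X 1 := by ring
    rw [hring, hx10, hx11, hx1]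
  rw [hexp, map_sub, map_sub, map_add, coeff_monomial_mul, coeff_monomial_mul,
    coeff_monomial_mul, coeff_monomial]
  simp only [one_mul, coeff_apply]
  have s1 : ∀ i : Fin 3, (single (1 : Fin 3) (1 : ℕ)) i = if i = 1 then 1 else 0 := by
    intro i
    rw [Finsupp.single_apply]
    by_cases h : i = 1
    · rw [if_pos h, if_pos h.symm]
    · rw [if_neg h, if_neg (fun hh => h hh.symm)]
  have s2 : ∀ i : Fin 3, ((single 1 1 + single 0 1 : Fin 3 →₀ ℕ)) i
      = if i = 1 ∨ i = 0 then 1 else 0 := by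
    intro i
    rw [Finsupp.add_apply, s1, Finsupp.single_apply]
    by_cases h1 : i = 1
    · subst h1
      rw [if_pos rfl, if_pos (Or.inl rfl), if_neg (by decide)]
      norm_num
    · by_cases h0 : i = 0
      · subst h0
        rw [if_neg (by decide), if_pos rfl, if_pos (Or.inr rfl)]
      · rw [if_neg h1, if_neg (fun h => h0 h.symm), if_neg (by tauto)]
        norm_num
  have s3 : ∀ i : Fin 3, ((single 1 1 + single 1 1 : Fin 3 →₀ ℕ)) i
      = if i = 1 then 2 else 0 := by
    intro i
    rw [Finsupp.add_apply, s1]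
    by_cases h : i = 1
    · rw [if_pos h, if_pos h]
    · rw [if_neg h, if_neg h]
  have ev1₀ : (d - single (1 : Fin 3) (1 : ℕ)) 0 = d 0 := by
    rw [Finsupp.tsub_apply, s1, if_neg (by decide), Nat.sub_zero]
  have ev1₁ : (d - single (1 : Fin 3) (1 : ℕ)) 1 = d 1 - 1 := by
    rw [Finsupp.tsub_apply, s1, if_pos rfl]
  have ev1₂ : (d - single (1 : Fin 3) (1 : ℕ)) 2 = d 2 := by
    rw [Finsupp.tsub_apply, s1, if_neg (by decide), Nat.sub_zero]
  have ev2₀ : (d - (single 1 1 + single 0 1 : Fin 3 →₀ ℕ)) 0 = d 0 - 1 := by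
    rw [Finsupp.tsub_apply, s2, if_pos (Or.inr rfl)]
  have ev2₁ : (d - (single 1 1 + single 0 1 : Fin 3 →₀ ℕ)) 1 = d 1 - 1 := by
    rw [Finsupp.tsub_apply, s2, if_pos (Or.inl rfl)]
  have ev2₂ : (d - (single 1 1 + single 0 1 : Fin 3 →₀ ℕ)) 2 = d 2 := by
    rw [Finsupp.tsub_apply, s2, if_neg (by decide), Nat.sub_zero]
  have ev3₀ : (d - (single 1 1 + single 1 1 : Fin 3 →₀ ℕ)) 0 = d 0 := by
    rw [Finsupp.tsub_apply, s3, if_neg (by decide), Nat.sub_zero]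
  have ev3₁ : (d - (single 1 1 + single 1 1 : Fin 3 →₀ ℕ)) 1 = d 1 - 2 := by
    rw [Finsupp.tsub_apply, s3, if_pos rfl]
  have ev3₂ : (d - (single 1 1 + single 1 1 : Fin 3 →₀ ℕ)) 2 = d 2 := by
    rw [Finsupp.tsub_apply, s3, if_neg (by decide), Nat.sub_zero]
  have hLHS : (UBgf d : ℤ) = ((UBSet (d 0) (d 1) (d 2)).ncard : ℤ) := rfl
  rw [hLHS]
  rcases Nat.eq_zero_or_pos (d 1) with hb0 | hb1
  · have n1 : ¬((single 1 1 : Fin 3 →₀ ℕ) ≤ d) := by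
      intro h
      have h1 := Finsupp.le_def.mp h 1
      rw [s1 1, if_pos rfl] at h1
      omega
    have n2 : ¬((single 1 1 + single 0 1 : Fin 3 →₀ ℕ) ≤ d) := by
      intro h
      have h1 := Finsupp.le_def.mp h 1
      rw [s2 1, if_pos (Or.inl rfl)] at h1
      omega
    have n3 : ¬((single 1 1 + single 1 1 : Fin 3 →₀ ℕ) ≤ d) := by
      intro h
      have h1 := Finsupp.le_def.mp h 1
      rw [s3 1, if_pos rfl] at h1
      omega
    have n4 : ¬(d = (single 1 1 : Fin 3 →₀ ℕ)) := by
      intro h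
      rw [h, s1 1, if_pos rfl] at hb0
      omega
    rw [if_neg n1, if_neg n2, if_neg n3, if_neg n4, hb0, UBSet_height_zero,
      Set.ncard_empty]
    norm_num
  · have hc1 : (single 1 1 : Fin 3 →₀ ℕ) ≤ d := by
      rw [Finsupp.le_def]
      intro i
      rw [s1]
      by_cases h : i = 1
      · rw [if_pos h, h]; exact hb1
      · rw [if_neg h]; exact Nat.zero_le _
    have hc2 : 1 ≤ d 0 → (single 1 1 + single 0 1 : Fin 3 →₀ ℕ) ≤ d := by
      intro ha
      rw [Finsupp.le_def]
      intro i
      rw [s2]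
      by_cases h : i = 1 ∨ i = 0
      · rw [if_pos h]
        rcases h with h | h
        · rw [h]; exact hb1
        · rw [h]; exact ha
      · rw [if_neg h]; exact Nat.zero_le _
    have hc3 : 2 ≤ d 1 → (single 1 1 + single 1 1 : Fin 3 →₀ ℕ) ≤ d := by
      intro h2b
      rw [Finsupp.le_def]
      intro i
      rw [s3]
      by_cases h : i = 1
      · rw [if_pos h, h]; exact h2b
      · rw [if_neg h]; exact Nat.zero_le _
    have hnc3 : d 1 < 2 → ¬((single 1 1 + single 1 1 : Fin 3 →₀ ℕ) ≤ d) := by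
      intro hlt h
      have h1 := Finsupp.le_def.mp h 1
      rw [s3 1, if_pos rfl] at h1
      omega
    have hbm1 : d 1 - 1 + 1 = d 1 := by omega
    rcases Nat.even_or_odd (d 0) with he | ho
    · obtain ⟨ρ, hρ⟩ := he
      have hρ' : d 0 = 2 * ρ := by omega
      rcases Nat.eq_zero_or_pos ρ with rfl | hρ1
      · have ha0 : d 0 = 0 := by omega
        have n2 : ¬((single 1 1 + single 0 1 : Fin 3 →₀ ℕ) ≤ d) := by
          intro h
          have h1 := Finsupp.le_def.mp h 0
          rw [s2 0, if_pos (Or.inr rfl)] at h1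
          omega
        rw [if_pos hc1, if_neg n2,
          T_even _ 0 (by rw [ev1₀, ha0]), ev1₁, ev1₂, ncard_PairsSet_zero,
          ha0, UBSet_width_zero, Set.ncard_empty]
        rcases le_or_gt 2 (d 1) with h2b | h2b
        · have n4 : ¬(d = (single 1 1 : Fin 3 →₀ ℕ)) := by
            intro h
            have h1 : d 1 = 1 := by rw [h, s1 1, if_pos rfl]
            omega
          rw [if_pos (hc3 h2b), T_even _ 0 (by rw [ev3₀, ha0]), ev3₁, ev3₂,
            ncard_PairsSet_zero, if_neg n4]
          norm_num
        · have hb1' : d 1 = 1 := by omega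
          rw [if_neg (hnc3 h2b)]
          rcases eq_or_ne (d 2) 0 with hc0 | hc0
          · have hd : d = (single 1 1 : Fin 3 →₀ ℕ) := by
              apply Finsupp.ext
              intro i
              rw [s1]
              by_cases h1 : i = 1
              · rw [if_pos h1, h1]; exact hb1'
              · rw [if_neg h1]
                by_cases h0 : i = 0
                · rw [h0]; exact ha0
                · have h2 : i = 2 := by
                    have h3 := i.isLt
                    have hv1 : i.val ≠ 1 := fun hv => h1 (Fin.ext hv)
                    have hv0 : i.val ≠ 0 := fun hv => h0 (Fin.ext hv)
                    apply Fin.ext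
                    omega
                  rw [h2]; exact hc0
            rw [if_pos hd, if_pos hc0]
            norm_num
          · rw [if_neg (fun h : d = (single 1 1 : Fin 3 →₀ ℕ) => hc0 (by
              rw [h, s1 2, if_neg (by decide)])), if_neg hc0]
            norm_num
      · have ha1 : 1 ≤ d 0 := by omega
        have n4 : ¬(d = (single 1 1 : Fin 3 →₀ ℕ)) := by
          intro h
          have h1 : d 0 = 0 := by rw [h, s1 0, if_neg (by decide)]
          omega
        rw [if_pos hc1, if_pos (hc2 ha1),
          T_even _ ρ (by rw [ev1₀]; omega), ev1₁, ev1₂, hbm1,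
          T_odd _ (by rw [ev2₀]; omega), if_neg n4]
        have hkey := ncard_UB_even ρ (d 1) (d 2) hρ1 hb1
        rw [show 2 * ρ = d 0 from hρ'.symm] at hkey
        rcases le_or_gt 2 (d 1) with h2b | h2b
        · rw [if_pos (hc3 h2b), T_even _ ρ (by rw [ev3₀]; omega), ev3₁, ev3₂,
            show d 1 - 2 + 1 = d 1 - 1 from by omega, hkey]
          ring
        · rw [if_neg (hnc3 h2b), hkey,
            show d 1 - 1 = 0 from by omega, PairsSet_b_zero ρ (d 2) hρ1,
            Set.ncard_empty]
          norm_num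
    · obtain ⟨ρ, hρ⟩ := ho
      have n4 : ¬(d = (single 1 1 : Fin 3 →₀ ℕ)) := by
        intro h
        have h1 : d 0 = 0 := by rw [h, s1 0, if_neg (by decide)]
        omega
      rw [if_pos hc1, if_pos (hc2 (by omega)),
        T_odd _ (by rw [ev1₀]; omega),
        T_even _ ρ (by rw [ev2₀]; omega), ev2₁, ev2₂, hbm1, if_neg n4]
      have hkey := ncard_UB_odd ρ (d 1) (d 2) hb1
      rw [show 2 * ρ + 1 = d 0 from by omega] at hkey
      rw [hkey]
      rcases le_or_gt 2 (d 1) with h2b | h2b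
      · rw [if_pos (hc3 h2b), T_odd _ (by rw [ev3₀]; omega)]
        ring
      · rw [if_neg (hnc3 h2b)]
        ring
end

section
/- For every n ≥ 0, the following three sets have the same cardinality: (i) Motzkin paths of length n+1 with no peaks (no factor UD); (ii) Motzkin paths of length n with no valleys (no factor DU); (iii) uneven bicolored Motzkin paths of size n, i.e., bicolored Motzkin paths M with u(M) + h2(M) + 2(d(M) + h1(M)) = n. -/
/-- Steps of a Motzkin path: up, down, horizontal. -/
inductive MStep : Type
  | U | D | H
  deriving DecidableEq

/-- A Motzkin path: a word over {U,D,H} such that every prefix has at least as many U's as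
D's, and the whole word has equally many U's and D's. -/
def IsMotzkin (w : List MStep) : Prop :=
  (∀ j, (w.take j).count MStep.D ≤ (w.take j).count MStep.U) ∧
    w.count MStep.U = w.count MStep.D

/-- A bicolored Motzkin path: a word over {U,D,H1,H2} such that every prefix has at least as
many U's as D's, and the whole word has equally many U's and D's. -/
def IsBicoloredMotzkin (w : List BStep) : Prop :=
  (∀ j, (w.take j).count BStep.D ≤ (w.take j).count BStep.U) ∧
    w.count BStep.U = w.count BStep.D

namespace PVU

open List

section generic
variable {α : Type*}

def hsum (e : α → ℤ) (w : List α) : ℤ := (w.map e).sum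

@[simp] lemma hsum_nil (e : α → ℤ) : hsum e [] = 0 := rfl
@[simp] lemma hsum_cons (e : α → ℤ) (x : α) (w : List α) :
    hsum e (x :: w) = e x + hsum e w := by simp [hsum]
@[simp] lemma hsum_append (e : α → ℤ) (v w : List α) :
    hsum e (v ++ w) = hsum e v + hsum e w := by simp [hsum]

def Bal (e : α → ℤ) (w : List α) : Prop :=
  (∀ p, p <+: w → 0 ≤ hsum e p) ∧ hsum e w = 0

lemma bal_nil (e : α → ℤ) : Bal e [] := ⟨fun p hp => by simp [List.prefix_nil.mp hp], rfl⟩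

lemma prefix_cons_cases {x : α} {w p : List α} (h : p <+: x :: w) :
    p = [] ∨ ∃ q, q <+: w ∧ p = x :: q := by
  cases p with
  | nil => exact Or.inl rfl
  | cons y q =>
    rcases List.cons_prefix_cons.mp h with ⟨rfl, hq⟩
    exact Or.inr ⟨q, hq, rfl⟩

lemma bal_cons_zero {e : α → ℤ} {x : α} (hx : e x = 0) {w : List α} :
    Bal e (x :: w) ↔ Bal e w := by
  constructor
  · rintro ⟨h1, h2⟩
    refine ⟨fun p hp => ?_, by simpa [hx] using h2⟩
    have := h1 (x :: p) (List.cons_prefix_cons.mpr ⟨rfl, hp⟩)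
    simpa [hx] using this
  · rintro ⟨h1, h2⟩
    refine ⟨fun p hp => ?_, by simp [hx, h2]⟩
    rcases prefix_cons_cases hp with rfl | ⟨q, hq, rfl⟩
    · simp
    · simpa [hx] using h1 q hq

lemma prefix_append_cases : ∀ {v : List α} {w p : List α}, p <+: v ++ w →
    p <+: v ∨ ∃ q, q <+: w ∧ p = v ++ q := by
  intro v
  induction v with
  | nil => intro w p h; exact Or.inr ⟨p, h, by simp⟩
  | cons a v ih =>
    intro w p h
    rcases prefix_cons_cases h with rfl | ⟨q, hq, rfl⟩
    · exact Or.inl (List.nil_prefix)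
    · rcases ih hq with h' | ⟨r, hr, rfl⟩
      · exact Or.inl (List.cons_prefix_cons.mpr ⟨rfl, h'⟩)
      · exact Or.inr ⟨r, hr, rfl⟩

lemma bal_wrap {e : α → ℤ} {u d : α} (hu : e u = 1) (hd : e d = -1)
    {v v' : List α} (hv : Bal e v) (hv' : Bal e v') : Bal e (u :: v ++ d :: v') := by
  constructor
  · intro p hp
    rcases prefix_cons_cases hp with rfl | ⟨q, hq, rfl⟩
    · simp
    rcases prefix_append_cases hq with h' | ⟨r, hr, rfl⟩
    · have := hv.1 _ h'; simp [hu]; linarith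
    rcases prefix_cons_cases hr with rfl | ⟨s, hs, rfl⟩
    · simp [hu, hv.2]
    · have := hv'.1 _ hs; simp [hu, hd, hv.2]; linarith
  · simp [hu, hd, hv.2, hv'.2]

/-- First-return decomposition. -/
lemma first_return {e : α → ℤ} {d : α} (hstep : ∀ x, -1 ≤ e x)
    (hd : ∀ x, e x = -1 → x = d) :
    ∀ (n : ℕ) (w : List α), w.length ≤ n → ∀ (m : ℤ), 1 ≤ m →
      (∀ p, p <+: w → 0 ≤ m + hsum e p) → m + hsum e w = 0 →
      ∃ v v', w = v ++ d :: v' ∧ m + hsum e v = 1 ∧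
        (∀ p, p <+: v → 1 ≤ m + hsum e p) ∧ Bal e v' := by
  intro n
  induction n with
  | zero =>
    intro w hw m hm _ htot
    interval_cases hl : w.length
    rw [List.length_eq_zero_iff.mp hl] at htot
    simp at htot; omega
  | succ n ih =>
    intro w hw m hm hpre htot
    cases w with
    | nil => simp at htot; omega
    | cons x w' =>
      have hx0 : 0 ≤ m + e x := by simpa using hpre [x] ⟨w', rfl⟩
      by_cases hz : m + e x = 0
      · have hex : e x = -1 := by have := hstep x; omega
        have hxd : x = d := hd x hex
        refine ⟨[], w', by rw [hxd]; rfl, by simp; omega, fun p hp => by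
          simp [List.prefix_nil.mp hp]; omega, ?_, ?_⟩
        · intro p hp
          have := hpre (x :: p) (List.cons_prefix_cons.mpr ⟨rfl, hp⟩)
          simp [hex] at this ⊢; omega
        · simp at htot; omega
      · have hm' : 1 ≤ m + e x := by omega
        have hw' : w'.length ≤ n := by simpa using hw
        obtain ⟨v, v', hdec, hv1, hvpos, hv'⟩ := ih w' hw' (m + e x) hm'
          (fun p hp => by
            have := hpre (x :: p) (List.cons_prefix_cons.mpr ⟨rfl, hp⟩)
            simpa [add_assoc] using this)
          (by simp at htot; omega)
        refine ⟨x :: v, v', by rw [hdec]; rfl, by simp; omega, ?_, hv'⟩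
        intro p hp
        rcases prefix_cons_cases hp with rfl | ⟨q, hq, rfl⟩
        · simpa using hm
        · have := hvpos q hq; simp; omega

lemma fr_unique_aux {e : α → ℤ} {d : α} (hd : e d = -1)
    {v1 v1' v2 v2' : List α} (h : v1 ++ d :: v1' = v2 ++ d :: v2')
    (b1 : hsum e v1 = 0) (b2 : ∀ p, p <+: v2 → 0 ≤ hsum e p)
    (hlt : v1.length < v2.length) : False := by
  have h1 : (v1 ++ [d]) <+: (v2 ++ d :: v2') := by
    rw [← h]
    exact ⟨v1', by simp⟩
  have h2 : (v1 ++ [d]) <+: v2 :=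
    List.prefix_of_prefix_length_le h1 ⟨d :: v2', rfl⟩ (by simp; omega)
  have := b2 _ h2
  simp [hd, b1] at this

lemma fr_unique {e : α → ℤ} {d : α} (hd : e d = -1)
    {v1 v1' v2 v2' : List α} (h : v1 ++ d :: v1' = v2 ++ d :: v2')
    (b1 : Bal e v1) (b2 : Bal e v2) : v1 = v2 ∧ v1' = v2' := by
  have hlen : v1.length = v2.length := by
    rcases lt_trichotomy v1.length v2.length with hl | hl | hl
    · exact absurd (fr_unique_aux hd h b1.2 b2.1 hl) (by simp)
    · exact hl
    · exact absurd (fr_unique_aux hd h.symm b2.2 b1.1 hl) (by simp)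
  obtain ⟨h1, h2⟩ := List.append_inj h hlen
  exact ⟨h1, by injection h2⟩



/-- avoiding the two-letter factor `[a,b]` as a chain condition -/
def Avoid (a b : α) (w : List α) : Prop :=
  List.Chain' (fun x y => ¬(x = a ∧ y = b)) w

lemma avoid_iff (a b : α) : ∀ w : List α, Avoid a b w ↔ ¬ [a, b] <:+: w := by
  intro w
  induction w with
  | nil => simp [Avoid, List.Chain']
  | cons x w ih =>
    rw [List.infix_cons_iff]
    constructor
    · intro h hc
      rcases hc with hpre | hinf
      · rcases List.cons_prefix_cons.mp hpre with ⟨rfl, h2⟩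
        obtain ⟨t, ht⟩ := h2
        rw [← ht] at h
        simp only [List.cons_append, List.nil_append] at h
        exact (List.isChain_cons_cons.mp h).1 ⟨rfl, rfl⟩
      · exact (ih.mp ((List.isChain_cons.mp h).2)) hinf
    · intro h
      apply List.isChain_cons.mpr
      refine ⟨?_, ih.mpr (fun hc => h (Or.inr hc))⟩
      rintro y hy ⟨rfl, rfl⟩
      apply h
      left
      cases w with
      | nil => simp at hy
      | cons z w => simp at hy; subst hy; exact List.cons_prefix_cons.mpr ⟨rfl,
          List.cons_prefix_cons.mpr ⟨rfl, List.nil_prefix⟩⟩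

end generic

/-! ### step values -/

def mval : MStep → ℤ
  | .U => 1 | .D => -1 | .H => 0

def bval : BStep → ℤ
  | .U => 1 | .D => -1 | _ => 0

lemma mval_step : ∀ x, -1 ≤ mval x := by rintro (_|_|_) <;> simp [mval]
lemma mval_d : ∀ x, mval x = -1 → x = MStep.D := by rintro (_|_|_) <;> simp [mval]
lemma bval_step : ∀ x, -1 ≤ bval x := by rintro (_|_|_|_) <;> simp [bval]
lemma bval_d : ∀ x, bval x = -1 → x = BStep.D := by rintro (_|_|_|_) <;> simp [bval]

lemma hsum_mval : ∀ w : List MStep,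
    hsum mval w = (w.count MStep.U : ℤ) - w.count MStep.D := by
  intro w
  induction w with
  | nil => simp
  | cons x w ih =>
    cases x <;> simp [List.count_cons, ih, mval] <;> push_cast <;> ring

lemma hsum_bval : ∀ w : List BStep,
    hsum bval w = (w.count BStep.U : ℤ) - w.count BStep.D := by
  intro w
  induction w with
  | nil => simp
  | cons x w ih =>
    cases x <;> simp [List.count_cons, ih, bval] <;> push_cast <;> ring

lemma isMotzkin_iff_bal (w : List MStep) : IsMotzkin w ↔ Bal mval w := by
  constructor
  · rintro ⟨h1, h2⟩
    constructor
    · intro p hp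
      rw [List.prefix_iff_eq_take.mp hp, hsum_mval]
      have := h1 p.length
      omega
    · rw [hsum_mval]; omega
  · rintro ⟨h1, h2⟩
    constructor
    · intro j
      have := h1 _ (List.take_prefix j w)
      rw [hsum_mval] at this
      omega
    · rw [hsum_mval] at h2; omega

lemma isBicolored_iff_bal (w : List BStep) : IsBicoloredMotzkin w ↔ Bal bval w := by
  constructor
  · rintro ⟨h1, h2⟩
    constructor
    · intro p hp
      rw [List.prefix_iff_eq_take.mp hp, hsum_bval]
      have := h1 p.length
      omega
    · rw [hsum_bval]; omega
  · rintro ⟨h1, h2⟩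
    constructor
    · intro j
      have := h1 _ (List.take_prefix j w)
      rw [hsum_bval] at this
      omega
    · rw [hsum_bval] at h2; omega

/-! ### the tree type -/

inductive T : Type
  | leaf : T
  | h : T → T
  | ud : T → T
  | udh : T → T → T

def sz : T → ℕ
  | .leaf => 0
  | .h t => 1 + sz t
  | .ud t => 2 + sz t
  | .udh t t' => 3 + sz t + sz t'

def toV : T → List MStep
  | .leaf => []
  | .h t => MStep.H :: toV t
  | .ud t => MStep.U :: toV t ++ [MStep.D]
  | .udh t t' => MStep.U :: toV t ++ MStep.D :: MStep.H :: toV t'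

def toP : T → List MStep
  | .leaf => [MStep.H]
  | .h t => MStep.H :: toP t
  | .ud t => MStep.U :: toP t ++ [MStep.D]
  | .udh t t' => MStep.U :: toP t ++ MStep.D :: toP t'

def toB : T → List BStep
  | .leaf => []
  | .h t => BStep.H2 :: toB t
  | .ud t => BStep.H1 :: toB t
  | .udh t t' => BStep.U :: toB t ++ BStep.D :: toB t'

lemma mU : mval MStep.U = 1 := rfl
lemma mD : mval MStep.D = -1 := rfl
lemma mH : mval MStep.H = 0 := rfl
lemma bU : bval BStep.U = 1 := rfl
lemma bD : bval BStep.D = -1 := rfl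
lemma bH1 : bval BStep.H1 = 0 := rfl
lemma bH2 : bval BStep.H2 = 0 := rfl

lemma toV_bal : ∀ t, Bal mval (toV t) := by
  intro t
  induction t with
  | leaf => exact bal_nil _
  | h t ih => exact (bal_cons_zero mH).mpr ih
  | ud t ih => exact bal_wrap mU mD ih (bal_nil _)
  | udh t t' ih ih' => exact bal_wrap mU mD ih ((bal_cons_zero mH).mpr ih')

lemma toP_bal : ∀ t, Bal mval (toP t) := by
  intro t
  induction t with
  | leaf => exact (bal_cons_zero mH).mpr (bal_nil _)
  | h t ih => exact (bal_cons_zero mH).mpr ih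
  | ud t ih => exact bal_wrap mU mD ih (bal_nil _)
  | udh t t' ih ih' => exact bal_wrap mU mD ih ih'

lemma toB_bal : ∀ t, Bal bval (toB t) := by
  intro t
  induction t with
  | leaf => exact bal_nil _
  | h t ih => exact (bal_cons_zero bH2).mpr ih
  | ud t ih => exact (bal_cons_zero bH1).mpr ih
  | udh t t' ih ih' => exact bal_wrap bU bD ih ih'

lemma toV_length : ∀ t, (toV t).length = sz t := by
  intro t
  induction t with
  | leaf => rfl
  | h t ih => simp [toV, sz, ih]; omega
  | ud t ih => simp [toV, sz, ih]; omega
  | udh t t' ih ih' => simp [toV, sz, ih, ih']; omega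

lemma toP_length : ∀ t, (toP t).length = sz t + 1 := by
  intro t
  induction t with
  | leaf => rfl
  | h t ih => simp [toP, sz, ih]; omega
  | ud t ih => simp [toP, sz, ih]; omega
  | udh t t' ih ih' => simp [toP, sz, ih, ih']; omega

lemma toB_size : ∀ t, (toB t).count BStep.U + (toB t).count BStep.H2
    + 2 * ((toB t).count BStep.D + (toB t).count BStep.H1) = sz t := by
  intro t
  induction t with
  | leaf => rfl
  | h t ih => simp [toB, sz, List.count_cons] at *; omega
  | ud t ih => simp [toB, sz, List.count_cons] at *; omega
  | udh t t' ih ih' => simp [toB, sz, List.count_cons, List.count_append] at *; omega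


/-! ### avoid helper lemmas -/

section avoidhelp
variable {α : Type*} {a b : α}

lemma avoid_nil : Avoid a b ([] : List α) := List.isChain_nil

lemma avoid_singleton (x : α) : Avoid a b [x] := List.isChain_singleton x

lemma avoid_cons {x : α} {w : List α} (h : Avoid a b w)
    (hx : x ≠ a ∨ w.head? ≠ some b) : Avoid a b (x :: w) := by
  refine List.isChain_cons.mpr ⟨?_, h⟩
  rintro y hy ⟨rfl, rfl⟩
  rcases hx with hx | hx
  · exact hx rfl
  · exact hx hy

lemma avoid_append {u v : List α} (hu : Avoid a b u) (hv : Avoid a b v)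
    (hj : u.getLast? ≠ some a ∨ v.head? ≠ some b) : Avoid a b (u ++ v) := by
  refine List.isChain_append.mpr ⟨hu, hv, ?_⟩
  rintro x hx y hy ⟨rfl, rfl⟩
  rcases hj with hj | hj
  · exact hj hx
  · exact hj hy

lemma avoid_tail {x : α} {w : List α} (h : Avoid a b (x :: w)) : Avoid a b w :=
  (List.isChain_cons.mp h).2

end avoidhelp

lemma toP_ne_nil (t : T) : toP t ≠ [] := by cases t <;> simp [toP]

lemma toP_head (t : T) : (toP t).head? = some MStep.U ∨ (toP t).head? = some MStep.H := by
  cases t <;> simp [toP]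

lemma toP_last (t : T) :
    (toP t).getLast? = some MStep.D ∨ (toP t).getLast? = some MStep.H := by
  induction t with
  | leaf => right; rfl
  | h t ih =>
    have : (MStep.H :: toP t) = [MStep.H] ++ toP t := rfl
    rw [toP, this, List.getLast?_append_of_ne_nil _ (toP_ne_nil t)]
    exact ih
  | ud t ih =>
    left
    have : toP (T.ud t) = (MStep.U :: toP t) ++ [MStep.D] := by simp [toP]
    rw [this, List.getLast?_concat]
  | udh t t' ih ih' =>
    have h1 : toP (T.udh t t') = (MStep.U :: toP t) ++ (MStep.D :: toP t') := by simp [toP]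
    have h2 : (MStep.D :: toP t') = [MStep.D] ++ toP t' := rfl
    rw [h1, List.getLast?_append_of_ne_nil _ (by simp), h2,
      List.getLast?_append_of_ne_nil _ (toP_ne_nil t')]
    exact ih'

lemma toV_avoid (t : T) : Avoid MStep.D MStep.U (toV t) := by
  induction t with
  | leaf => exact avoid_nil
  | h t ih => exact avoid_cons ih (Or.inl (by simp))
  | ud t ih =>
    refine avoid_cons (avoid_append ih (avoid_singleton _) (Or.inr (by simp))) (Or.inl (by simp))
  | udh t t' ih ih' =>
    refine avoid_cons (avoid_append ih ?_ (Or.inr (by simp))) (Or.inl (by simp))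
    exact avoid_cons (avoid_cons ih' (Or.inl (by simp))) (Or.inr (by simp))

lemma toP_avoid (t : T) : Avoid MStep.U MStep.D (toP t) := by
  induction t with
  | leaf => exact avoid_singleton _
  | h t ih => exact avoid_cons ih (Or.inl (by simp))
  | ud t ih =>
    refine avoid_cons (avoid_append ih (avoid_singleton _) ?_) ?_
    · rcases toP_last t with h | h <;> rw [h] <;> exact Or.inl (by simp)
    · refine Or.inr ?_
      show (toP t ++ [MStep.D]).head? ≠ some MStep.D
      rw [List.head?_append_of_ne_nil _ (toP_ne_nil t)]
      rcases toP_head t with h | h <;> rw [h] <;> simp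
  | udh t t' ih ih' =>
    refine avoid_cons (avoid_append ih (avoid_cons ih' (Or.inl (by simp))) ?_) ?_
    · rcases toP_last t with h | h <;> rw [h] <;> exact Or.inl (by simp)
    · refine Or.inr ?_
      show (toP t ++ (MStep.D :: toP t')).head? ≠ some MStep.D
      rw [List.head?_append_of_ne_nil _ (toP_ne_nil t)]
      rcases toP_head t with h | h <;> rw [h] <;> simp

/-! ### injectivity -/

lemma toV_inj : ∀ t s : T, toV t = toV s → t = s := by
  intro t
  induction t with
  | leaf => intro s h; cases s <;> simp [toV] at h ⊢
  | h t ih =>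
    intro s h
    cases s with
    | leaf => exact absurd h (by simp [toV])
    | h s =>
      simp only [toV, List.cons.injEq, true_and] at h
      rw [ih _ h]
    | ud s => exact absurd h (by simp [toV])
    | udh s s' => exact absurd h (by simp [toV])
  | ud t ih =>
    intro s h
    cases s with
    | leaf => exact absurd h (by simp [toV])
    | h s => exact absurd h (by simp [toV])
    | ud s =>
      simp only [toV, List.cons.injEq, true_and, List.append_cancel_right_eq] at h
      rw [ih _ h]
    | udh s s' =>
      simp only [toV, List.cons_append, List.cons.injEq, true_and] at h
      have := fr_unique mD h (toV_bal t) (toV_bal s)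
      simp at this
  | udh t t' ih ih' =>
    intro s h
    cases s with
    | leaf => exact absurd h (by simp [toV])
    | h s => exact absurd h (by simp [toV])
    | ud s =>
      simp only [toV, List.cons_append, List.cons.injEq, true_and] at h
      have := fr_unique mD h (toV_bal t) (toV_bal s)
      simp at this
    | udh s s' =>
      simp only [toV, List.cons_append, List.cons.injEq, true_and] at h
      obtain ⟨h1, h2⟩ := fr_unique mD h (toV_bal t) (toV_bal s)
      simp only [List.cons.injEq, true_and] at h2
      rw [ih _ h1, ih' _ h2]

lemma toP_inj : ∀ t s : T, toP t = toP s → t = s := by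
  intro t
  induction t with
  | leaf =>
    intro s h
    cases s with
    | leaf => rfl
    | h s =>
      simp only [toP, List.cons_append, List.cons.injEq, true_and] at h
      exact absurd h.symm (toP_ne_nil s)
    | ud s => exact absurd h (by simp [toP])
    | udh s s' => exact absurd h (by simp [toP])
  | h t ih =>
    intro s h
    cases s with
    | leaf =>
      simp only [toP, List.cons_append, List.cons.injEq, true_and] at h
      exact absurd h (toP_ne_nil t)
    | h s =>
      simp only [toP, List.cons_append, List.cons.injEq, true_and] at h
      rw [ih _ h]
    | ud s => exact absurd h (by simp [toP])
    | udh s s' => exact absurd h (by simp [toP])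
  | ud t ih =>
    intro s h
    cases s with
    | leaf => exact absurd h (by simp [toP])
    | h s => exact absurd h (by simp [toP])
    | ud s =>
      simp only [toP, List.cons.injEq, true_and, List.append_cancel_right_eq] at h
      rw [ih _ h]
    | udh s s' =>
      simp only [toP, List.cons_append, List.cons.injEq, true_and] at h
      have := fr_unique mD h (toP_bal t) (toP_bal s)
      exact absurd this.2.symm (toP_ne_nil s')
  | udh t t' ih ih' =>
    intro s h
    cases s with
    | leaf => exact absurd h (by simp [toP])
    | h s => exact absurd h (by simp [toP])
    | ud s =>
      simp only [toP, List.cons_append, List.cons.injEq, true_and] at h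
      have := fr_unique mD h (toP_bal t) (toP_bal s)
      exact absurd this.2 (toP_ne_nil t')
    | udh s s' =>
      simp only [toP, List.cons_append, List.cons.injEq, true_and] at h
      obtain ⟨h1, h2⟩ := fr_unique mD h (toP_bal t) (toP_bal s)
      rw [ih _ h1, ih' _ h2]

lemma toB_inj : ∀ t s : T, toB t = toB s → t = s := by
  intro t
  induction t with
  | leaf => intro s h; cases s <;> simp [toB] at h ⊢
  | h t ih =>
    intro s h
    cases s with
    | leaf => exact absurd h (by simp [toB])
    | h s =>
      simp only [toB, List.cons.injEq, true_and] at h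
      rw [ih _ h]
    | ud s => exact absurd h (by simp [toB])
    | udh s s' => exact absurd h (by simp [toB])
  | ud t ih =>
    intro s h
    cases s with
    | leaf => exact absurd h (by simp [toB])
    | h s => exact absurd h (by simp [toB])
    | ud s =>
      simp only [toB, List.cons.injEq, true_and] at h
      rw [ih _ h]
    | udh s s' => exact absurd h (by simp [toB])
  | udh t t' ih ih' =>
    intro s h
    cases s with
    | leaf => exact absurd h (by simp [toB])
    | h s => exact absurd h (by simp [toB])
    | ud s => exact absurd h (by simp [toB])
    | udh s s' =>
      simp only [toB, List.cons_append, List.cons.injEq, true_and] at h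
      obtain ⟨h1, h2⟩ := fr_unique bD h (toB_bal t) (toB_bal s)
      rw [ih _ h1, ih' _ h2]

/-! ### surjectivity -/

lemma toV_surj : ∀ (n : ℕ) (w : List MStep), w.length ≤ n → Bal mval w →
    Avoid MStep.D MStep.U w → ∃ t, toV t = w := by
  intro n
  induction n with
  | zero =>
    intro w hw _ _
    rw [List.length_eq_zero_iff.mp (Nat.le_zero.mp hw)]
    exact ⟨T.leaf, rfl⟩
  | succ n ih =>
    intro w hw hbal hav
    cases w with
    | nil => exact ⟨T.leaf, rfl⟩
    | cons x w' =>
      have hw' : w'.length ≤ n := by simpa using hw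
      cases x with
      | D =>
        have := hbal.1 [MStep.D] ⟨w', rfl⟩
        simp [mval] at this
      | H =>
        obtain ⟨t, ht⟩ := ih w' hw' ((bal_cons_zero mH).mp hbal) (avoid_tail hav)
        exact ⟨T.h t, by rw [toV, ht]⟩
      | U =>
        have hpre : ∀ p, p <+: w' → 0 ≤ 1 + hsum mval p := by
          intro p hp
          have := hbal.1 (MStep.U :: p) (List.cons_prefix_cons.mpr ⟨rfl, hp⟩)
          simpa [mval] using this
        have htot : 1 + hsum mval w' = 0 := by
          have := hbal.2; simpa [mval] using this
        obtain ⟨v, v', hdec, hv1, hvpos, hv'⟩ :=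
          first_return mval_step mval_d w'.length w' le_rfl 1 le_rfl hpre htot
        have hbv : Bal mval v := ⟨fun p hp => by have := hvpos p hp; omega, by omega⟩
        subst hdec
        have hch : List.IsChain (fun x y => ¬(x = MStep.D ∧ y = MStep.U))
            (v ++ MStep.D :: v') := avoid_tail hav
        have hav_v : Avoid MStep.D MStep.U v := hch.left_of_append
        have hsp := (List.isChain_split.mp hch).2
        have hav_v' : Avoid MStep.D MStep.U v' := (List.isChain_cons.mp hsp).2
        have hhead : ∀ y ∈ v'.head?, y ≠ MStep.U := by
          intro y hy hyu
          exact (List.isChain_cons.mp hsp).1 y hy ⟨rfl, hyu⟩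
        have hlv : v.length ≤ n := by simp at hw'; omega
        obtain ⟨t, ht⟩ := ih v hlv hbv hav_v
        cases v' with
        | nil => exact ⟨T.ud t, by simp [toV, ht]⟩
        | cons y v'' =>
          have hy0 : 0 ≤ mval y := by simpa using hv'.1 [y] ⟨v'', rfl⟩
          have hyU : y ≠ MStep.U := hhead y rfl
          have hyH : y = MStep.H := by cases y <;> simp_all [mval]
          subst hyH
          have hbv'' : Bal mval v'' := (bal_cons_zero mH).mp hv'
          have hav'' : Avoid MStep.D MStep.U v'' := avoid_tail hav_v'
          have hlv'' : v''.length ≤ n := by simp at hw'; omega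
          obtain ⟨t', ht'⟩ := ih v'' hlv'' hbv'' hav''
          exact ⟨T.udh t t', by simp [toV, ht, ht']⟩

lemma toP_surj : ∀ (n : ℕ) (w : List MStep), w.length ≤ n → Bal mval w →
    Avoid MStep.U MStep.D w → w ≠ [] → ∃ t, toP t = w := by
  intro n
  induction n with
  | zero =>
    intro w hw _ _ hne
    exact absurd (List.length_eq_zero_iff.mp (Nat.le_zero.mp hw)) hne
  | succ n ih =>
    intro w hw hbal hav hne
    cases w with
    | nil => exact absurd rfl hne
    | cons x w' =>
      have hw' : w'.length ≤ n := by simpa using hw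
      cases x with
      | D =>
        have := hbal.1 [MStep.D] ⟨w', rfl⟩
        simp [mval] at this
      | H =>
        cases w'seq : w' with
        | nil => exact ⟨T.leaf, by rw [w'seq] at *; rfl⟩
        | cons z w'' =>
          rw [← w'seq]
          obtain ⟨t, ht⟩ := ih w' hw' ((bal_cons_zero mH).mp hbal) (avoid_tail hav)
            (by rw [w'seq]; simp)
          exact ⟨T.h t, by rw [toP, ht]⟩
      | U =>
        have hpre : ∀ p, p <+: w' → 0 ≤ 1 + hsum mval p := by
          intro p hp
          have := hbal.1 (MStep.U :: p) (List.cons_prefix_cons.mpr ⟨rfl, hp⟩)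
          simpa [mval] using this
        have htot : 1 + hsum mval w' = 0 := by
          have := hbal.2; simpa [mval] using this
        obtain ⟨v, v', hdec, hv1, hvpos, hv'⟩ :=
          first_return mval_step mval_d w'.length w' le_rfl 1 le_rfl hpre htot
        have hbv : Bal mval v := ⟨fun p hp => by have := hvpos p hp; omega, by omega⟩
        subst hdec
        have hvne : v ≠ [] := by
          rintro rfl
          exact (List.isChain_cons_cons.mp hav).1 ⟨rfl, rfl⟩
        have hch : List.IsChain (fun x y => ¬(x = MStep.U ∧ y = MStep.D))
            (v ++ MStep.D :: v') := avoid_tail hav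
        have hav_v : Avoid MStep.U MStep.D v := hch.left_of_append
        have hsp := (List.isChain_split.mp hch).2
        have hav_v' : Avoid MStep.U MStep.D v' := (List.isChain_cons.mp hsp).2
        have hlv : v.length ≤ n := by simp at hw'; omega
        obtain ⟨t, ht⟩ := ih v hlv hbv hav_v hvne
        cases v'seq : v' with
        | nil =>
          subst v'seq
          exact ⟨T.ud t, by simp [toP, ht]⟩
        | cons y v'' =>
          have hlv' : v'.length ≤ n := by simp at hw'; omega
          obtain ⟨t', ht'⟩ := ih v' hlv' hv' hav_v' (by rw [v'seq]; simp)
          exact ⟨T.udh t t', by simp [toP, ht, ht', v'seq]⟩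

lemma toB_surj : ∀ (n : ℕ) (w : List BStep), w.length ≤ n → Bal bval w →
    ∃ t, toB t = w := by
  intro n
  induction n with
  | zero =>
    intro w hw _
    rw [List.length_eq_zero_iff.mp (Nat.le_zero.mp hw)]
    exact ⟨T.leaf, rfl⟩
  | succ n ih =>
    intro w hw hbal
    cases w with
    | nil => exact ⟨T.leaf, rfl⟩
    | cons x w' =>
      have hw' : w'.length ≤ n := by simpa using hw
      cases x with
      | D =>
        have := hbal.1 [BStep.D] ⟨w', rfl⟩
        simp [bval] at this
      | H1 =>
        obtain ⟨t, ht⟩ := ih w' hw' ((bal_cons_zero bH1).mp hbal)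
        exact ⟨T.ud t, by rw [toB, ht]⟩
      | H2 =>
        obtain ⟨t, ht⟩ := ih w' hw' ((bal_cons_zero bH2).mp hbal)
        exact ⟨T.h t, by rw [toB, ht]⟩
      | U =>
        have hpre : ∀ p, p <+: w' → 0 ≤ 1 + hsum bval p := by
          intro p hp
          have := hbal.1 (BStep.U :: p) (List.cons_prefix_cons.mpr ⟨rfl, hp⟩)
          simpa [bval] using this
        have htot : 1 + hsum bval w' = 0 := by
          have := hbal.2; simpa [bval] using this
        obtain ⟨v, v', hdec, hv1, hvpos, hv'⟩ :=
          first_return bval_step bval_d w'.length w' le_rfl 1 le_rfl hpre htot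
        have hbv : Bal bval v := ⟨fun p hp => by have := hvpos p hp; omega, by omega⟩
        subst hdec
        have hlv : v.length ≤ n := by simp at hw'; omega
        have hlv' : v'.length ≤ n := by simp at hw'; omega
        obtain ⟨t, ht⟩ := ih v hlv hbv
        obtain ⟨t', ht'⟩ := ih v' hlv' hv'
        exact ⟨T.udh t t', by simp [toB, ht, ht']⟩

/-! ### the three sets as images -/

lemma setP_eq (n : ℕ) :
    {w : List MStep | IsMotzkin w ∧ w.length = n + 1 ∧ ¬ [MStep.U, MStep.D] <:+: w}
      = toP '' {t | sz t = n} := by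
  ext w
  simp only [Set.mem_setOf_eq, Set.mem_image]
  constructor
  · rintro ⟨hm, hl, hni⟩
    obtain ⟨t, ht⟩ := toP_surj w.length w le_rfl ((isMotzkin_iff_bal w).mp hm)
      ((avoid_iff _ _ w).mpr hni) (by intro h; rw [h] at hl; simp at hl)
    refine ⟨t, ?_, ht⟩
    have := toP_length t
    rw [ht, hl] at this
    omega
  · rintro ⟨t, hn, rfl⟩
    exact ⟨(isMotzkin_iff_bal _).mpr (toP_bal t), by rw [toP_length, hn],
      (avoid_iff _ _ _).mp (toP_avoid t)⟩

lemma setV_eq (n : ℕ) :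
    {w : List MStep | IsMotzkin w ∧ w.length = n ∧ ¬ [MStep.D, MStep.U] <:+: w}
      = toV '' {t | sz t = n} := by
  ext w
  simp only [Set.mem_setOf_eq, Set.mem_image]
  constructor
  · rintro ⟨hm, hl, hni⟩
    obtain ⟨t, ht⟩ := toV_surj w.length w le_rfl ((isMotzkin_iff_bal w).mp hm)
      ((avoid_iff _ _ w).mpr hni)
    refine ⟨t, ?_, ht⟩
    rw [← toV_length, ht, hl]
  · rintro ⟨t, hn, rfl⟩
    exact ⟨(isMotzkin_iff_bal _).mpr (toV_bal t), by rw [toV_length, hn],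
      (avoid_iff _ _ _).mp (toV_avoid t)⟩

lemma setB_eq (n : ℕ) :
    {m : List BStep | IsBicoloredMotzkin m ∧
        m.count BStep.U + m.count BStep.H2
          + 2 * (m.count BStep.D + m.count BStep.H1) = n}
      = toB '' {t | sz t = n} := by
  ext w
  simp only [Set.mem_setOf_eq, Set.mem_image]
  constructor
  · rintro ⟨hm, hc⟩
    obtain ⟨t, ht⟩ := toB_surj w.length w le_rfl ((isBicolored_iff_bal w).mp hm)
    refine ⟨t, ?_, ht⟩
    rw [← toB_size, ht, hc]
  · rintro ⟨t, hn, rfl⟩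
    exact ⟨(isBicolored_iff_bal _).mpr (toB_bal t), by rw [toB_size, hn]⟩

end PVU

/-- For every `n`, the following three sets are equinumerous: Motzkin paths of length `n+1`
with no peak `UD`; Motzkin paths of length `n` with no valley `DU`; and uneven bicolored
Motzkin paths of size `n`, i.e. bicolored Motzkin paths with `u + h2 + 2(d + h1) = n`. -/
theorem peakless_valleyless_uneven (n : ℕ) :
    {w : List MStep | IsMotzkin w ∧ w.length = n + 1
        ∧ ¬ [MStep.U, MStep.D] <:+: w}.ncard
      = {w : List MStep | IsMotzkin w ∧ w.length = n
        ∧ ¬ [MStep.D, MStep.U] <:+: w}.ncard ∧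
    {w : List MStep | IsMotzkin w ∧ w.length = n
        ∧ ¬ [MStep.D, MStep.U] <:+: w}.ncard
      = {m : List BStep | IsBicoloredMotzkin m ∧
          m.count BStep.U + m.count BStep.H2
            + 2 * (m.count BStep.D + m.count BStep.H1) = n}.ncard := by
  constructor
  · rw [PVU.setP_eq n, PVU.setV_eq n,
      Set.ncard_image_of_injective _ (fun a b => PVU.toP_inj a b),
      Set.ncard_image_of_injective _ (fun a b => PVU.toV_inj a b)]
  · rw [PVU.setV_eq n, PVU.setB_eq n,
      Set.ncard_image_of_injective _ (fun a b => PVU.toV_inj a b),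
      Set.ncard_image_of_injective _ (fun a b => PVU.toB_inj a b)]
end

section
/- For every n ≥ 0, the number of grand Motzkin paths of length n with no peaks (no factor UD) equals the number of uneven bicolored grand Motzkin paths of size n, i.e., bicolored grand Motzkin paths M with u(M) + h2(M) + 2(d(M) + h1(M)) = n. -/
/-- A grand Motzkin path: a word over {U,D,H} with equally many U's and D's
(the path may go below the x-axis). -/
def IsGrandMotzkin (w : List MStep) : Prop :=
  w.count MStep.U = w.count MStep.D

namespace PGM

/-- The common index set: pairs of boolean words with equal length, equal number of
`true`s, and `length + #true = n`. -/
def P (n : ℕ) : Set (List Bool × List Bool) :=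
  {p | p.1.length = p.2.length ∧ p.1.count true = p.2.count true
      ∧ p.1.length + p.1.count true = n}

/-! ### The Motzkin side -/

def fA : MStep → Option Bool
  | MStep.U => some true
  | MStep.H => some false
  | MStep.D => none

def fB : MStep → Option Bool
  | MStep.D => some true
  | MStep.H => some false
  | MStep.U => none

def merge : List Bool → List Bool → List MStep
  | a, true :: b => MStep.D :: merge a b
  | [], _ => []
  | true :: a, b => MStep.U :: merge a b
  | false :: _, [] => []
  | false :: a, false :: b => MStep.H :: merge a b
  termination_by a b => a.length + b.length

lemma countA_true (w : List MStep) :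
    (w.filterMap fA).count true = w.count MStep.U := by
  induction w with
  | nil => simp
  | cons x t ih => cases x <;> simp [fA, List.filterMap_cons, List.count_cons, ih]

lemma countA_false (w : List MStep) :
    (w.filterMap fA).count false = w.count MStep.H := by
  induction w with
  | nil => simp
  | cons x t ih => cases x <;> simp [fA, List.filterMap_cons, List.count_cons, ih]

lemma countB_true (w : List MStep) :
    (w.filterMap fB).count true = w.count MStep.D := by
  induction w with
  | nil => simp
  | cons x t ih => cases x <;> simp [fB, List.filterMap_cons, List.count_cons, ih]

lemma countB_false (w : List MStep) :
    (w.filterMap fB).count false = w.count MStep.H := by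
  induction w with
  | nil => simp
  | cons x t ih => cases x <;> simp [fB, List.filterMap_cons, List.count_cons, ih]

lemma bool_count (l : List Bool) : l.count true + l.count false = l.length := by
  induction l with
  | nil => simp
  | cons x t ih => cases x <;> simp [List.count_cons] <;> omega

lemma mstep_count (w : List MStep) :
    w.count MStep.U + w.count MStep.D + w.count MStep.H = w.length := by
  induction w with
  | nil => simp
  | cons x t ih => cases x <;> simp [List.count_cons] <;> omega

lemma bstep_count (w : List BStep) :
    w.count BStep.U + w.count BStep.D + w.count BStep.H1 + w.count BStep.H2
      = w.length := by
  induction w with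
  | nil => simp
  | cons x t ih => cases x <;> simp [List.count_cons] <;> omega

lemma merge_recover (a b : List Bool) :
    a.count false = b.count false →
    (merge a b).filterMap fA = a ∧ (merge a b).filterMap fB = b := by
  induction a, b using merge.induct with
  | case1 a b ih =>
    intro h
    simp only [List.count_cons] at h
    have := ih (by simpa using h)
    simp [merge, fA, fB, List.filterMap_cons, this.1, this.2]
  | case2 b hb =>
    intro h
    match b, hb with
    | [], _ => simp [merge]
    | true :: b, hb => exact absurd rfl (hb b)
    | false :: b, _ => simp [List.count_cons] at h
  | case3 a b hb ih =>
    intro h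
    simp only [List.count_cons] at h
    have := ih (by simpa using h)
    have hm : merge (true :: a) b = MStep.U :: merge a b := by
      match b, hb with
      | [], _ => simp [merge]
      | true :: b, hb => exact absurd rfl (hb b)
      | false :: b, _ => simp [merge]
    simp [hm, fA, fB, List.filterMap_cons, this.1, this.2]
  | case4 a =>
    intro h
    simp [List.count_cons] at h
  | case5 a b ih =>
    intro h
    simp only [List.count_cons] at h
    have := ih (by simpa using h)
    simp [merge, fA, fB, this.1, this.2]

lemma merge_length (a b : List Bool) :
    a.count false = b.count false →
    (merge a b).length = a.length + b.count true := by
  intro h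
  obtain ⟨h1, h2⟩ := merge_recover a b h
  have l1 : (merge a b).count MStep.U = a.count true := by
    rw [← countA_true, h1]
  have l2 : (merge a b).count MStep.D = b.count true := by
    rw [← countB_true, h2]
  have l3 : (merge a b).count MStep.H = a.count false := by
    rw [← countA_false, h1]
  have := mstep_count (merge a b)
  have := bool_count a
  omega

lemma merge_head (a b : List Bool) (hb : ∀ b', b ≠ true :: b') :
    ∀ r, merge a b ≠ MStep.D :: r := by
  intro r
  match a, b with
  | _, true :: b => exact absurd rfl (hb b)
  | [], [] => simp [merge]
  | [], false :: _ => simp [merge]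
  | true :: a, [] => simp [merge]
  | true :: a, false :: _ => simp [merge]
  | false :: a, [] => simp [merge]
  | false :: a, false :: b => simp [merge]

lemma merge_noUD (a b : List Bool) :
    ¬ [MStep.U, MStep.D] <:+: merge a b := by
  induction a, b using merge.induct with
  | case1 a b ih =>
    rw [show merge a (true :: b) = MStep.D :: merge a b from by simp [merge]]
    rw [List.infix_cons_iff]
    rintro (hp | hi)
    · simp [List.cons_prefix_cons] at hp
    · exact ih hi
  | case2 b hb =>
    simp [merge]
  | case3 a b hb ih =>
    have hm : merge (true :: a) b = MStep.U :: merge a b := by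
      match b, hb with
      | [], _ => simp [merge]
      | true :: b, hb => exact absurd rfl (hb b)
      | false :: b, _ => simp [merge]
    rw [hm, List.infix_cons_iff]
    rintro (hp | hi)
    · rw [List.cons_prefix_cons] at hp
      obtain ⟨-, t, ht⟩ := hp
      exact merge_head a b hb t (by simpa using ht.symm)
    · exact ih hi
  | case4 a =>
    simp [merge]
  | case5 a b ih =>
    rw [show merge (false :: a) (false :: b) = MStep.H :: merge a b from by simp [merge]]
    rw [List.infix_cons_iff]
    rintro (hp | hi)
    · simp [List.cons_prefix_cons] at hp
    · exact ih hi

lemma headB (t : List MStep) (h : ¬ [MStep.U, MStep.D] <:+: (MStep.U :: t)) :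
    ∀ b', t.filterMap fB ≠ true :: b' := by
  induction t with
  | nil => simp
  | cons x t ih =>
    cases x
    · -- U
      have h' : ¬ [MStep.U, MStep.D] <:+: (MStep.U :: t) := fun hi =>
        h (hi.trans (List.suffix_cons MStep.U (MStep.U :: t)).isInfix)
      simpa [fB, List.filterMap_cons] using ih h'
    · -- D
      exact absurd ⟨[], t, rfl⟩ h
    · -- H
      simp [fB]

lemma recover_merge (w : List MStep) (h : ¬ [MStep.U, MStep.D] <:+: w) :
    merge (w.filterMap fA) (w.filterMap fB) = w := by
  induction w with
  | nil => simp [merge]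
  | cons x t ih =>
    have ht : ¬ [MStep.U, MStep.D] <:+: t := fun hi =>
      h (hi.trans (List.suffix_cons x t).isInfix)
    cases x
    · -- U
      have hb := headB t h
      have hm : merge (true :: t.filterMap fA) (t.filterMap fB)
          = MStep.U :: merge (t.filterMap fA) (t.filterMap fB) := by
        match hBt : t.filterMap fB, hb with
        | [], _ => simp [merge]
        | true :: b, hb => exact absurd rfl (hb b)
        | false :: b, _ => simp [merge]
      simp [fA, fB, List.filterMap_cons, hm, ih ht]
    · -- D
      simp [fA, fB, List.filterMap_cons, merge, ih ht]
    · -- H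
      rw [show (MStep.H :: t).filterMap fA = false :: t.filterMap fA from by simp [fA],
        show (MStep.H :: t).filterMap fB = false :: t.filterMap fB from by simp [fB]]
      rw [show merge (false :: t.filterMap fA) (false :: t.filterMap fB)
        = MStep.H :: merge (t.filterMap fA) (t.filterMap fB) from by simp [merge]]
      rw [ih ht]

/-! ### The bicolored side -/

def g1 : BStep → Bool
  | BStep.D => true
  | BStep.H1 => true
  | BStep.U => false
  | BStep.H2 => false

def g2 : BStep → Bool
  | BStep.U => true
  | BStep.H1 => true
  | BStep.D => false
  | BStep.H2 => false

def hInv : Bool × Bool → BStep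
  | (false, true) => BStep.U
  | (true, false) => BStep.D
  | (true, true) => BStep.H1
  | (false, false) => BStep.H2

lemma cnt_g1 (m : List BStep) :
    (m.map g1).count true = m.count BStep.D + m.count BStep.H1 := by
  induction m with
  | nil => simp
  | cons x t ih => cases x <;> simp [g1, List.count_cons, ih] <;> omega

lemma cnt_g2 (m : List BStep) :
    (m.map g2).count true = m.count BStep.U + m.count BStep.H1 := by
  induction m with
  | nil => simp
  | cons x t ih => cases x <;> simp [g2, List.count_cons, ih] <;> omega

lemma unG_G (m : List BStep) : ((m.map g1).zip (m.map g2)).map hInv = m := by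
  rw [List.zip_map', List.map_map]
  have : (hInv ∘ fun s => (g1 s, g2 s)) = id := by
    funext s; cases s <;> rfl
  rw [this, List.map_id]

lemma G_unG_fst (a b : List Bool) (hl : a.length = b.length) :
    ((a.zip b).map hInv).map g1 = a := by
  rw [List.map_map]
  have : (g1 ∘ hInv) = Prod.fst := by
    funext q; obtain ⟨x, y⟩ := q; cases x <;> cases y <;> rfl
  rw [this, List.map_fst_zip (le_of_eq hl)]

lemma G_unG_snd (a b : List Bool) (hl : a.length = b.length) :
    ((a.zip b).map hInv).map g2 = b := by
  rw [List.map_map]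
  have : (g2 ∘ hInv) = Prod.snd := by
    funext q; obtain ⟨x, y⟩ := q; cases x <;> cases y <;> rfl
  rw [this, List.map_snd_zip (le_of_eq hl.symm)]

/-! ### The two bijections -/

lemma bijF (n : ℕ) :
    Set.BijOn (fun w => (w.filterMap fA, w.filterMap fB))
      {w : List MStep | IsGrandMotzkin w ∧ w.length = n
        ∧ ¬ [MStep.U, MStep.D] <:+: w} (P n) := by
  apply Set.InvOn.bijOn (f' := fun p => merge p.1 p.2)
  · constructor
    · intro w hw
      exact recover_merge w hw.2.2
    · rintro ⟨a, b⟩ hp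
      have hcf : a.count false = b.count false := by
        have := bool_count a
        have := bool_count b
        obtain ⟨e1, e2, e3⟩ := hp
        simp only at e1 e2 e3
        omega
      obtain ⟨h1, h2⟩ := merge_recover a b hcf
      simp only [Prod.mk.injEq]
      exact ⟨h1, h2⟩
  · rintro w ⟨hgm, hlen, hpk⟩
    have c1 := countA_true w
    have c2 := countA_false w
    have c3 := countB_true w
    have c4 := countB_false w
    have c5 := bool_count (w.filterMap fA)
    have c6 := bool_count (w.filterMap fB)
    have c7 := mstep_count w
    have hud : w.count MStep.U = w.count MStep.D := hgm
    refine ⟨?_, ?_, ?_⟩ <;> simp only <;> omega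
  · rintro ⟨a, b⟩ ⟨e1, e2, e3⟩
    simp only at e1 e2 e3
    have hcf : a.count false = b.count false := by
      have := bool_count a
      have := bool_count b
      omega
    obtain ⟨h1, h2⟩ := merge_recover a b hcf
    have l1 : (merge a b).count MStep.U = a.count true := by
      rw [← countA_true, h1]
    have l2 : (merge a b).count MStep.D = b.count true := by
      rw [← countB_true, h2]
    refine ⟨?_, ?_, merge_noUD a b⟩
    · show (merge a b).count MStep.U = (merge a b).count MStep.D
      omega
    · rw [merge_length a b hcf]
      omega

lemma bijG (n : ℕ) :
    Set.BijOn (fun m => (m.map g1, m.map g2))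
      {m : List BStep | IsBicoloredGrandMotzkin m ∧
        m.count BStep.U + m.count BStep.H2
          + 2 * (m.count BStep.D + m.count BStep.H1) = n} (P n) := by
  apply Set.InvOn.bijOn (f' := fun p => (p.1.zip p.2).map hInv)
  · constructor
    · intro m _
      exact unG_G m
    · rintro ⟨a, b⟩ hp
      have hl : a.length = b.length := hp.1
      simp only [Prod.mk.injEq]
      exact ⟨G_unG_fst a b hl, G_unG_snd a b hl⟩
  · rintro m ⟨hbc, hsz⟩
    have c1 := cnt_g1 m
    have c2 := cnt_g2 m
    have c3 := bstep_count m
    have hud : m.count BStep.U = m.count BStep.D := hbc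
    refine ⟨?_, ?_, ?_⟩ <;> simp only [List.length_map] <;> omega
  · rintro ⟨a, b⟩ ⟨e1, e2, e3⟩
    simp only at e1 e2 e3
    set m := (a.zip b).map hInv with hm
    have hf : m.map g1 = a := G_unG_fst a b e1
    have hs : m.map g2 = b := G_unG_snd a b e1
    have c1 := cnt_g1 m
    rw [hf] at c1
    have c2 := cnt_g2 m
    rw [hs] at c2
    have c3 := bstep_count m
    have hlm : m.length = a.length := by
      rw [hm]; simp [e1]
    show IsBicoloredGrandMotzkin m ∧ m.count BStep.U + m.count BStep.H2
      + 2 * (m.count BStep.D + m.count BStep.H1) = n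
    refine ⟨?_, ?_⟩
    · show m.count BStep.U = m.count BStep.D
      omega
    · omega

theorem peakless_grandMotzkin_eq_uneven' (n : ℕ) :
    {w : List MStep | IsGrandMotzkin w ∧ w.length = n
        ∧ ¬ [MStep.U, MStep.D] <:+: w}.ncard
      = {m : List BStep | IsBicoloredGrandMotzkin m ∧
          m.count BStep.U + m.count BStep.H2
            + 2 * (m.count BStep.D + m.count BStep.H1) = n}.ncard := by
  have hF := bijF n
  have hG := bijG n
  calc {w : List MStep | IsGrandMotzkin w ∧ w.length = n
        ∧ ¬ [MStep.U, MStep.D] <:+: w}.ncard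
      = (P n).ncard := by
        rw [← hF.image_eq]
        exact (Set.ncard_image_of_injOn hF.injOn).symm
    _ = _ := by
        rw [← hG.image_eq]
        exact Set.ncard_image_of_injOn hG.injOn

end PGM

/-- For every `n`, the number of grand Motzkin paths of length `n` with no peak `UD` equals
the number of uneven bicolored grand Motzkin paths of size `n`, i.e. bicolored grand
Motzkin paths with `u + h2 + 2(d + h1) = n`. -/
theorem peakless_grandMotzkin_eq_uneven (n : ℕ) :
    {w : List MStep | IsGrandMotzkin w ∧ w.length = n
        ∧ ¬ [MStep.U, MStep.D] <:+: w}.ncard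
      = {m : List BStep | IsBicoloredGrandMotzkin m ∧
          m.count BStep.U + m.count BStep.H2
            + 2 * (m.count BStep.D + m.count BStep.H1) = n}.ncard := by
  exact PGM.peakless_grandMotzkin_eq_uneven' n
end
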